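/- arXiv:1611.08962 — 4 statements merged into one kernel-verified Lean document; each statement's English description precedes it below -/
import Mathlib

section
/- Let p be a prime with p ≡ 3 (mod 4), and let v ∈ ℂ^p be defined by v_m = (−(p−1) + 2i√p)/(p+1) if m ∈ Q and v_m = 1 if m ∈ N. Then for every integer j, |Σ_{m=0}^{p−1} v_m ω_p^{−jm}|² = p; equivalently, the unit vector (1/√p)·v is unbiased to the Fourier basis of ℂ^p. -/
open scoped Classical

/-- `ω p = exp(2πi/p)`, a primitive `p`-th root of unity. -/
noncomputable def omegaRoot (p : ℕ) : ℂ := Complex.exp (2 * Real.pi * Complex.I / p)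

/-- The quadratic residues modulo `p` (including `0`), viewed inside `{0, 1, …, p-1}`:
`m ∈ Q` iff `m ≡ x² (mod p)` for some integer `x`. -/
noncomputable def Qres (p : ℕ) : Finset ℕ :=
  (Finset.range p).filter (fun m => ∃ x : ℤ, Int.ModEq (p : ℤ) (x ^ 2) (m : ℤ))

/-- The value `(−(p−1) + 2i√p)/(p+1)` taken by `v` on quadratic residues. -/
noncomputable def alphaQ (p : ℕ) : ℂ :=
  (-((p : ℂ) - 1) + 2 * (Real.sqrt p : ℂ) * Complex.I) / ((p : ℂ) + 1)

theorem stmt_4 (p : ℕ) (hp : p.Prime) (hp4 : p % 4 = 3) (j : ℤ) :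
    ‖∑ m ∈ Finset.range p,
        (if m ∈ Qres p then alphaQ p else 1) * omegaRoot p ^ (-(j * (m : ℤ)))‖ ^ 2
      = p := by
  haveI : Fact p.Prime := ⟨hp⟩
  haveI : NeZero p := ⟨hp.ne_zero⟩
  have hp2 : p ≠ 2 := by omega
  have hchar : ringChar (ZMod p) ≠ 2 := by
    rw [ZMod.ringChar_zmod_n]; exact hp2
  have hω : IsPrimitiveRoot (omegaRoot p) p := by
    simpa [omegaRoot] using Complex.isPrimitiveRoot_exp p hp.ne_zero
  have hωne : omegaRoot p ≠ 0 := Complex.exp_ne_zero _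
  set ψ : AddChar (ZMod p) ℂ := AddChar.zmodChar p hω.pow_eq_one with hψdef
  have hψprim : ψ.IsPrimitive := AddChar.zmodChar_primitive_of_primitive_root p hω
  have happ : ∀ a : ZMod p, ψ a = omegaRoot p ^ a.val := fun a => AddChar.zmodChar_apply _ _
  set χ : MulChar (ZMod p) ℂ := (quadraticChar (ZMod p)).ringHomComp (Int.castRingHom ℂ) with hχdef
  have hχ1 : χ ≠ 1 :=
    (MulChar.ringHomComp_ne_one_iff Int.cast_injective).mpr (quadraticChar_ne_one hchar)
  have hχquad : χ.IsQuadratic := (quadraticChar_isQuadratic (ZMod p)).comp _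
  have hχneg : χ (-1) = -1 := by
    have h1 : quadraticChar (ZMod p) (-1) = -1 :=
      quadraticChar_neg_one_iff_not_isSquare.mpr
        (by rw [ZMod.exists_sq_eq_neg_one_iff]; simp [hp4])
    simp [hχdef, MulChar.ringHomComp_apply, h1]
  -- conjugation facts
  have hconjω : (starRingEnd ℂ) (omegaRoot p) = (omegaRoot p)⁻¹ := by
    rw [omegaRoot, ← Complex.exp_conj, ← Complex.exp_neg]
    congr 1
    simp only [map_div₀, map_mul, Complex.conj_I, Complex.conj_ofNat, Complex.conj_natCast]
    rw [Complex.conj_ofReal]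
    ring
  have hconjψ : ∀ x : ZMod p, (starRingEnd ℂ) (ψ x) = ψ (-x) := by
    intro x
    rw [AddChar.map_neg_eq_inv, happ, map_pow, hconjω, inv_pow]
  have hconjχ : ∀ a : ZMod p, (starRingEnd ℂ) (χ a) = χ a := by
    intro a
    simp [hχdef, MulChar.ringHomComp_apply]
  -- reindex the sum over `ZMod p`
  set c : ZMod p := ((-j : ℤ) : ZMod p) with hcdef
  set S : ℂ := ∑ m ∈ Finset.range p,
      (if m ∈ Qres p then alphaQ p else 1) * omegaRoot p ^ (-(j * (m : ℤ))) with hSdef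
  have hQ : ∀ m : ℕ, m < p → (m ∈ Qres p ↔ IsSquare ((m : ZMod p))) := by
    intro m hm
    simp only [Qres, Finset.mem_filter, Finset.mem_range]
    constructor
    · rintro ⟨-, x, hx⟩
      refine ⟨(x : ZMod p), ?_⟩
      have h2 := (ZMod.intCast_eq_intCast_iff _ _ _).mpr hx
      push_cast at h2
      rw [← h2]; ring
    · rintro ⟨r, hr⟩
      obtain ⟨x, rfl⟩ := ZMod.intCast_surjective r
      refine ⟨hm, x, ?_⟩
      rw [← ZMod.intCast_eq_intCast_iff]
      push_cast
      rw [hr]; ring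
  have hpow : ∀ m : ℕ, omegaRoot p ^ (-(j * (m : ℤ))) = ψ (c * (m : ZMod p)) := by
    intro m
    have hcast : c * (m : ZMod p) = ((-(j * (m : ℤ)) : ℤ) : ZMod p) := by
      rw [hcdef]; push_cast; ring
    rw [hcast, happ]
    set k : ℤ := -(j * (m : ℤ)) with hk
    have hval : ((((k : ZMod p)).val : ℤ)) = k % p := ZMod.val_intCast k
    have hdvd : (p : ℤ) ∣ k - (((k : ZMod p)).val : ℤ) := by
      rw [hval]
      exact Int.dvd_self_sub_of_emod_eq rfl
    have h1 : omegaRoot p ^ (k - (((k : ZMod p)).val : ℤ)) = 1 :=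
      (hω.zpow_eq_one_iff_dvd _).mpr hdvd
    rw [zpow_sub₀ hωne] at h1
    have h2 : omegaRoot p ^ k = omegaRoot p ^ ((((k : ZMod p)).val : ℤ)) :=
      (div_eq_one_iff_eq (zpow_ne_zero _ hωne)).mp h1
    rw [h2, zpow_natCast]
  have hre : S = ∑ a : ZMod p, (if IsSquare a then alphaQ p else 1) * ψ (c * a) := by
    rw [hSdef]
    refine Finset.sum_nbij' (fun m => (m : ZMod p)) (fun a => a.val) ?_ ?_ ?_ ?_ ?_
    · intro m _; exact Finset.mem_univ _
    · intro a _; exact Finset.mem_range.mpr (ZMod.val_lt a)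
    · intro m hm; exact ZMod.val_cast_of_lt (Finset.mem_range.mp hm)
    · intro a _; simp [ZMod.natCast_val, ZMod.cast_id]
    · intro m hm
      rw [hpow m]
      congr 1
      by_cases h : IsSquare ((m : ZMod p))
      · rw [if_pos h, if_pos ((hQ m (Finset.mem_range.mp hm)).mpr h)]
      · rw [if_neg h, if_neg (fun hh => h ((hQ m (Finset.mem_range.mp hm)).mp hh))]
  set w : ℂ := (alphaQ p - 1) / 2 with hwdef
  have hpt : ∀ a : ZMod p, (if IsSquare a then alphaQ p else 1) * ψ (c * a)
      = (1 + w) * ψ (c * a) + w * (χ a * ψ (c * a)) + (if a = 0 then w else 0) := by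
    intro a
    by_cases h0 : a = 0
    · subst h0
      rw [if_pos ⟨0, by ring⟩, if_pos rfl]
      have hχ0 : χ (0 : ZMod p) = 0 := by
        simp [hχdef, MulChar.ringHomComp_apply]
      rw [hχ0, mul_zero, zero_mul, AddChar.map_zero_eq_one, hwdef]
      ring
    · rw [if_neg h0]
      by_cases hsq : IsSquare a
      · have hχa : χ a = 1 := by
          have := (quadraticChar_one_iff_isSquare h0).mpr hsq
          simp [hχdef, MulChar.ringHomComp_apply, this]
        rw [if_pos hsq, hχa, hwdef]
        ring
      · have hχa : χ a = -1 := by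
          have := quadraticChar_neg_one_iff_not_isSquare.mpr hsq
          simp [hχdef, MulChar.ringHomComp_apply, this]
        rw [if_neg hsq, hχa, hwdef]
        ring
  have hsplit : S = (1 + w) * (∑ a : ZMod p, ψ (c * a))
      + w * (∑ a : ZMod p, χ a * ψ (c * a)) + w := by
    rw [hre, Finset.sum_congr rfl (fun a _ => hpt a)]
    rw [Finset.sum_add_distrib, Finset.sum_add_distrib, ← Finset.mul_sum, ← Finset.mul_sum]
    congr 1
    simp
  have hsum1 : (∑ a : ZMod p, ψ (c * a)) = if c = 0 then (p : ℂ) else 0 := by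
    have := AddChar.sum_mulShift (ψ := ψ) c hψprim
    simp only [mul_comm] at this ⊢
    rw [this, ZMod.card]
    split_ifs <;> simp
  -- key facts about √p
  have hsq : (Real.sqrt p : ℂ) * (Real.sqrt p : ℂ) = (p : ℂ) := by
    rw [← Complex.ofReal_mul, Real.mul_self_sqrt (by positivity)]
    simp
  have hp1 : ((p : ℂ) + 1) ≠ 0 := by
    have h := Nat.cast_ne_zero (R := ℂ).mpr p.succ_ne_zero
    push_cast at h
    exact h
  have hI : Complex.I * Complex.I = -1 := Complex.I_mul_I
  -- conjugate of w
  have hconjw : (starRingEnd ℂ) w = ((-((p : ℂ) - 1) - 2 * (Real.sqrt p : ℂ) * Complex.I) / ((p : ℂ) + 1) - 1) / 2 := by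
    rw [hwdef, alphaQ]
    simp only [map_div₀, map_sub, map_add, map_neg, map_mul, map_one, Complex.conj_I,
      Complex.conj_natCast, Complex.conj_ofNat, Complex.conj_ofReal]
    ring
  have finish : S * (starRingEnd ℂ) S = (p : ℂ) → ‖S‖ ^ 2 = p := by
    intro key
    rw [Complex.sq_norm]
    rw [Complex.mul_conj] at key
    exact_mod_cast key
  by_cases hc : c = 0
  · -- j ≡ 0 (mod p)
    have hsum2 : (∑ a : ZMod p, χ a * ψ (c * a)) = 0 := by
      have h0 : ∀ a : ZMod p, χ a * ψ (c * a) = ((quadraticChar (ZMod p) a : ℤ) : ℂ) := by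
        intro a
        rw [hc, zero_mul, AddChar.map_zero_eq_one, mul_one]
        simp [hχdef, MulChar.ringHomComp_apply]
      rw [Finset.sum_congr rfl (fun a _ => h0 a), ← Int.cast_sum,
        quadraticChar_sum_zero hchar]
      simp
    have hSval : S = (Real.sqrt p : ℂ) * Complex.I := by
      rw [hsplit, hsum1, if_pos hc, hsum2, hwdef, alphaQ]
      field_simp
      ring
    apply finish
    rw [hSval]
    rw [map_mul, Complex.conj_I, Complex.conj_ofReal]
    linear_combination (-(Complex.I * Complex.I)) * hsq - (p : ℂ) * hI
  · -- j ≢ 0 (mod p)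
    set G : ℂ := gaussSum χ (ψ.mulShift c) with hGdef
    have hG : (∑ a : ZMod p, χ a * ψ (c * a)) = G := by
      rw [hGdef, gaussSum]
      simp [AddChar.mulShift_apply]
    have hψ'prim : (ψ.mulShift c).IsPrimitive :=
      AddChar.IsPrimitive.of_ne_one (hψprim hc)
    have hG2 : G ^ 2 = -(p : ℂ) := by
      rw [hGdef, gaussSum_sq hχ1 hχquad hψ'prim, hχneg, ZMod.card]
      ring
    have hGconj : (starRingEnd ℂ) G = -G := by
      have h1 : (starRingEnd ℂ) G = ∑ a : ZMod p, χ a * ψ (-(c * a)) := by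
        rw [hGdef, gaussSum, map_sum]
        refine Finset.sum_congr rfl fun a _ => ?_
        rw [map_mul, hconjχ, AddChar.mulShift_apply, hconjψ]
      have h2 : (∑ a : ZMod p, χ a * ψ (-(c * a))) = ∑ a : ZMod p, χ (-a) * ψ (c * a) := by
        refine Fintype.sum_equiv (Equiv.neg (ZMod p)) _ _ fun a => ?_
        simp [mul_neg, neg_neg]
      have h3 : ∀ a : ZMod p, χ (-a) = - χ a := by
        intro a
        rw [show (-a : ZMod p) = (-1) * a by ring, map_mul, hχneg]
        ring
      rw [h1, h2, Finset.sum_congr rfl (fun a _ => by rw [h3 a, neg_mul]), ← hG]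
      simp
    have hSval : S = w * (G + 1) := by
      rw [hsplit, hsum1, if_neg hc, hG]
      ring
    apply finish
    have hww : w * (starRingEnd ℂ) w = (p : ℂ) / ((p : ℂ) + 1) := by
      rw [hconjw, hwdef, alphaQ]
      field_simp
      linear_combination (-4 * ((p:ℂ)+1) * (Complex.I * Complex.I)) * hsq
        + (-4 * ((p:ℂ)+1) * (p:ℂ)) * hI + (4 * (p:ℂ) * (Complex.I * Complex.I)) * hsq
        + (4 * (p:ℂ) * (p:ℂ)) * hI
    calc S * (starRingEnd ℂ) S = (w * (starRingEnd ℂ) w) * (1 - G ^ 2) := by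
          rw [hSval, map_mul, map_add, map_one, hGconj]; ring
      _ = ((p : ℂ) / ((p : ℂ) + 1)) * (1 + p) := by rw [hww, hG2]; ring
      _ = p := by
          rw [show (1 : ℂ) + p = (p : ℂ) + 1 by ring, mul_comm, mul_comm ((p:ℂ)+1),
            div_mul_cancel₀ _ hp1]
end

section
/- Let p be a prime with p ≡ 3 (mod 4), and let v ∈ ℂ^p be defined by v_m = (−(p−1) + 2i√p)/(p+1) if m ∈ Q and v_m = 1 if m ∈ N. Then the p vectors (1/√p)·v^(k), k = 0,…,p−1, form an orthonormal basis of ℂ^p that is mutually unbiased to the standard basis of ℂ^p and mutually unbiased to the Fourier basis of ℂ^p. -/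
open scoped ComplexInnerProductSpace Classical

/-- The `j`-th Fourier basis vector of `ℂ^p`, with components `ω_p^{jm}/√p`. -/
noncomputable def fourierVec (p : ℕ) (j : Fin p) : EuclideanSpace ℂ (Fin p) :=
  WithLp.toLp 2 (fun m => omegaRoot p ^ ((j : ℕ) * (m : ℕ)) / (Real.sqrt p : ℂ))

/-- The cyclic shift `v^(k)` of `v`, with components `(v^(k))_{(m+k) mod p} = v_m`. -/
def cyclicShift {p : ℕ} (k : Fin p) (v : EuclideanSpace ℂ (Fin p)) :
    EuclideanSpace ℂ (Fin p) :=
  WithLp.toLp 2 (fun n => v (n - k))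

/-- The vector `v ∈ ℂ^p` with `v_m = (−(p−1) + 2i√p)/(p+1)` for `m ∈ Q` and `v_m = 1`
for `m ∈ N`. -/
noncomputable def vQ (p : ℕ) : EuclideanSpace ℂ (Fin p) :=
  WithLp.toLp 2 (fun m => if (m : ℕ) ∈ Qres p then alphaQ p else 1)


section scal
variable (p : ℕ)

lemma hπ : ((p:ℂ) + 1) ≠ 0 := by
  have : ((p:ℂ) + 1) = ((p + 1 : ℕ) : ℂ) := by push_cast; ring
  rw [this, Ne, Nat.cast_eq_zero]
  omega

lemma sqrt_sq : ((Real.sqrt p : ℝ) : ℂ) ^ 2 = (p : ℂ) := by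
  rw [← Complex.ofReal_pow, Real.sq_sqrt (by positivity : (0:ℝ) ≤ (p:ℝ))]
  norm_cast

lemma conj_alpha : (starRingEnd ℂ) (alphaQ p) =
    (-((p : ℂ) - 1) - 2 * (Real.sqrt p : ℂ) * Complex.I) / ((p : ℂ) + 1) := by
  simp only [alphaQ, map_div₀, map_add, map_mul, map_sub, map_neg, Complex.conj_I,
    Complex.conj_ofReal, map_one, map_ofNat, Complex.conj_natCast]
  ring

lemma alpha_mul_conj : alphaQ p * (starRingEnd ℂ) (alphaQ p) = 1 := by
  rw [conj_alpha, alphaQ]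
  have h1 := hπ p
  have h2 := sqrt_sq p
  field_simp
  linear_combination (-4 * Complex.I^2) * h2 - 4 * (p:ℂ) * Complex.I_sq

lemma alpha_add_conj : ((p:ℂ) + 1) * (alphaQ p + (starRingEnd ℂ) (alphaQ p)) = -2 * ((p:ℂ) - 1) := by
  rw [conj_alpha, alphaQ]
  have h1 := hπ p
  field_simp
  ring

end scal

section om
variable (p : ℕ)

lemma omega_pow_p (hp2 : 2 ≤ p) : omegaRoot p ^ p = 1 := by
  have hp0 : (p:ℂ) ≠ 0 := Nat.cast_ne_zero.mpr (by omega)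
  rw [omegaRoot, ← Complex.exp_nat_mul]
  have : (p:ℂ) * (2 * Real.pi * Complex.I / p) = 2 * Real.pi * Complex.I := by
    field_simp
  rw [this, Complex.exp_two_pi_mul_I]

lemma omega_ne_one (hp2 : 2 ≤ p) : omegaRoot p ≠ 1 := by
  intro h
  rw [omegaRoot, Complex.exp_eq_one_iff] at h
  obtain ⟨n, hn⟩ := h
  have hp0 : (p:ℂ) ≠ 0 := Nat.cast_ne_zero.mpr (by omega)
  have h2 : (2 * Real.pi * Complex.I) ≠ 0 := by
    simp [Real.pi_ne_zero, Complex.I_ne_zero, Complex.ofReal_ne_zero]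
  have : (1:ℂ) = n * p := by
    field_simp at hn
    apply mul_right_cancel₀ h2
    rw [one_mul]; linear_combination (2 * Real.pi * Complex.I) * hn
  have : ((1:ℤ):ℂ) = ((n * p : ℤ) : ℂ) := by push_cast; exact this
  have h3 : (1:ℤ) = n * p := by exact_mod_cast this
  have : (p:ℤ) ∣ 1 := Dvd.intro_left n h3.symm
  have := Int.le_of_dvd one_pos this
  omega

lemma omega_pow_mod (hp2 : 2 ≤ p) (N : ℕ) : omegaRoot p ^ (N % p) = omegaRoot p ^ N := by
  conv_rhs => rw [← Nat.div_add_mod N p]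
  rw [pow_add, pow_mul, omega_pow_p p hp2, one_pow, one_mul]

lemma omega_geom (hp2 : 2 ≤ p) : ∑ k ∈ Finset.range p, omegaRoot p ^ k = 0 := by
  rw [geom_sum_eq (omega_ne_one p hp2), omega_pow_p p hp2, sub_self, zero_div]

lemma conj_omega_mul (hp2 : 2 ≤ p) : (starRingEnd ℂ) (omegaRoot p) * omegaRoot p = 1 := by
  rw [omegaRoot, ← Complex.exp_conj, ← Complex.exp_add]
  have : (starRingEnd ℂ) (2 * Real.pi * Complex.I / p) + 2 * Real.pi * Complex.I / p = 0 := by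
    simp only [map_div₀, map_mul, Complex.conj_I, Complex.conj_ofReal, map_ofNat,
      Complex.conj_natCast]
    ring
  rw [this, Complex.exp_zero]

end om

open Finset

section zm

section zm
variable (p : ℕ) [hpf : Fact p.Prime]

noncomputable def Efun (a : ZMod p) : ℂ := omegaRoot p ^ a.val

variable [NeZero p]

lemma hp2' : 2 ≤ p := hpf.out.two_le

lemma Efun_natCast (N : ℕ) : Efun p (N : ZMod p) = omegaRoot p ^ N := by
  rw [Efun, ZMod.val_natCast, omega_pow_mod p (hp2' p)]

lemma Efun_add (a b : ZMod p) : Efun p (a + b) = Efun p a * Efun p b := by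
  rw [Efun, ZMod.val_add, omega_pow_mod p (hp2' p), pow_add, Efun, Efun]

lemma Efun_zero : Efun p 0 = 1 := by rw [Efun, ZMod.val_zero, pow_zero]

lemma Efun_conj_mul (a : ZMod p) : (starRingEnd ℂ) (Efun p a) * Efun p a = 1 := by
  rw [Efun, map_pow, ← mul_pow, conj_omega_mul p (hp2' p), one_pow]

lemma Efun_sum : ∑ a : ZMod p, Efun p a = 0 := by
  rw [← omega_geom p (hp2' p)]
  exact Finset.sum_nbij' (fun a => a.val) (fun k => (k : ZMod p))
    (fun a _ => Finset.mem_range.mpr (ZMod.val_lt a))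
    (fun k _ => Finset.mem_univ _)
    (fun a _ => ZMod.natCast_zmod_val a)
    (fun k hk => ZMod.val_cast_of_lt (Finset.mem_range.mp hk))
    (fun a _ => rfl)

lemma Efun_sum_mul (t : ZMod p) (ht : t ≠ 0) : ∑ a : ZMod p, Efun p (a * t) = 0 := by
  have hbij : Function.Bijective (fun a : ZMod p => a * t) :=
    (Finite.injective_iff_bijective).mp (mul_left_injective₀ ht)
  rw [Fintype.sum_bijective _ hbij _ (fun a => Efun p a) (fun a => rfl)]
  exact Efun_sum p

noncomputable def chi (a : ZMod p) : ℂ := ((quadraticChar (ZMod p) a : ℤ) : ℂ)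

lemma ringChar_ne_two (hp4 : p % 4 = 3) : ringChar (ZMod p) ≠ 2 := by
  rw [ZMod.ringChar_zmod_n]; omega

lemma chi_zero : chi p 0 = 0 := by simp [chi]

lemma chi_one : chi p 1 = 1 := by simp [chi]

lemma chi_mul (a b : ZMod p) : chi p (a * b) = chi p a * chi p b := by
  simp [chi, map_mul]

lemma chi_sq (a : ZMod p) (ha : a ≠ 0) : chi p a * chi p a = 1 := by
  have := quadraticChar_sq_one (F := ZMod p) ha
  rw [pow_two] at this
  simp only [chi, ← Int.cast_mul, this, Int.cast_one]

lemma chi_sum (hp4 : p % 4 = 3) : ∑ a : ZMod p, chi p a = 0 := by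
  have := quadraticChar_sum_zero (ringChar_ne_two p hp4)
  simp only [chi]
  exact_mod_cast congrArg (fun z : ℤ => (z : ℂ)) this

lemma chi_neg_one (hp4 : p % 4 = 3) : chi p (-1) = -1 := by
  have : ¬ IsSquare (-1 : ZMod p) := by
    rw [ZMod.exists_sq_eq_neg_one_iff]; omega
  simp [chi, quadraticChar_neg_one_iff_not_isSquare.mpr this]

lemma chi_isSquare (a : ZMod p) (ha : a ≠ 0) (h : IsSquare a) : chi p a = 1 := by
  simp [chi, (quadraticChar_one_iff_isSquare ha).mpr h]

lemma chi_not_isSquare (a : ZMod p) (h : ¬ IsSquare a) : chi p a = -1 := by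
  simp [chi, quadraticChar_neg_one_iff_not_isSquare.mpr h]

lemma chi_inv (a : ZMod p) : chi p a⁻¹ = chi p a := by
  rcases eq_or_ne a 0 with rfl | ha
  · simp
  · have h1 : chi p a * chi p a⁻¹ = 1 := by
      rw [← chi_mul, mul_inv_cancel₀ ha, chi_one]
    have h2 := chi_sq p a ha
    have : chi p a * chi p a⁻¹ = chi p a * chi p a := h1.trans h2.symm
    exact (mul_left_cancel₀ (by intro h; rw [h] at h2; simpa using h2) this)

lemma chi_corr (hp4 : p % 4 = 3) (d : ZMod p) (hd : d ≠ 0) : ∑ n : ZMod p, chi p n * chi p (n + d) = -1 := by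
  classical
  have key : ∑ n ∈ Finset.univ.erase (0 : ZMod p), chi p n * chi p (n + d)
      = ∑ t ∈ Finset.univ.erase (1 : ZMod p), chi p t := by
    apply Finset.sum_nbij' (i := fun n => 1 + d * n⁻¹) (j := fun t => d * (t - 1)⁻¹)
    · intro n hn
      have hn0 : n ≠ 0 := (Finset.mem_erase.mp hn).1
      refine Finset.mem_erase.mpr ⟨?_, Finset.mem_univ _⟩
      intro h
      have : d * n⁻¹ = 0 := by linear_combination h
      rcases mul_eq_zero.mp this with h' | h'
      · exact hd h'
      · exact hn0 (inv_eq_zero.mp h')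
    · intro t ht
      have ht1 : t ≠ 1 := (Finset.mem_erase.mp ht).1
      refine Finset.mem_erase.mpr ⟨?_, Finset.mem_univ _⟩
      intro h
      rcases mul_eq_zero.mp h with h' | h'
      · exact hd h'
      · exact ht1 (by have := inv_eq_zero.mp h'; rwa [sub_eq_zero] at this)
    · intro n hn
      have hn0 : n ≠ 0 := (Finset.mem_erase.mp hn).1
      field_simp
      rw [add_sub_cancel_left, div_self hd]
    · intro t ht
      have ht1 : t ≠ 1 := (Finset.mem_erase.mp ht).1
      have : t - 1 ≠ 0 := sub_ne_zero.mpr ht1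
      field_simp
      ring
    · intro n hn
      have hn0 : n ≠ 0 := (Finset.mem_erase.mp hn).1
      have h1 : 1 + d * n⁻¹ = n⁻¹ * (n + d) := by field_simp
      rw [h1, chi_mul, chi_inv]
  have h0 : ∑ n : ZMod p, chi p n * chi p (n + d)
      = ∑ n ∈ Finset.univ.erase (0 : ZMod p), chi p n * chi p (n + d) := by
    rw [← Finset.sum_erase_add _ _ (Finset.mem_univ (0 : ZMod p)), chi_zero, zero_mul, add_zero]
  have h1 : ∑ t ∈ Finset.univ.erase (1 : ZMod p), chi p t = -1 := by
    have h2 := Finset.sum_erase_add Finset.univ (chi p) (Finset.mem_univ (1 : ZMod p))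
    rw [chi_sum p hp4, chi_one] at h2
    linear_combination h2
  rw [h0, key, h1]


lemma chi_conj (a : ZMod p) : (starRingEnd ℂ) (chi p a) = chi p a := by
  simp [chi]

lemma Efun_conj (a : ZMod p) : (starRingEnd ℂ) (Efun p a) = Efun p (-a) := by
  have h1 := Efun_conj_mul p a
  have h2 : Efun p a * Efun p (-a) = 1 := by
    rw [← Efun_add, add_neg_cancel, Efun_zero]
  calc (starRingEnd ℂ) (Efun p a)
      = (starRingEnd ℂ) (Efun p a) * (Efun p a * Efun p (-a)) := by rw [h2, mul_one]
    _ = ((starRingEnd ℂ) (Efun p a) * Efun p a) * Efun p (-a) := by ring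
    _ = Efun p (-a) := by rw [h1, one_mul]

lemma Efun_mul_conj (a : ZMod p) : Efun p a * (starRingEnd ℂ) (Efun p a) = 1 := by
  rw [Efun_conj, ← Efun_add, add_neg_cancel, Efun_zero]

noncomputable def wfun (n : ZMod p) : ℂ := if IsSquare n then alphaQ p else 1

noncomputable def deltaf (n : ZMod p) : ℂ := if n = 0 then 1 else 0

lemma mem_Qres_iff (n : ZMod p) : n.val ∈ Qres p ↔ IsSquare n := by
  rw [Qres, Finset.mem_filter, Finset.mem_range]
  constructor
  · rintro ⟨-, x, hx⟩
    have hcast : ((x ^ 2 : ℤ) : ZMod p) = ((n.val : ℤ) : ZMod p) :=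
      (ZMod.intCast_eq_intCast_iff _ _ _).mpr hx
    push_cast at hcast
    rw [ZMod.natCast_zmod_val] at hcast
    exact ⟨(x : ZMod p), by rw [← hcast]; ring⟩
  · rintro ⟨r, hr⟩
    refine ⟨ZMod.val_lt n, (r.val : ℤ), (ZMod.intCast_eq_intCast_iff _ _ _).mp ?_⟩
    push_cast
    rw [ZMod.natCast_zmod_val, ZMod.natCast_zmod_val, hr]
    ring

lemma wfun_mul_conj (m : ZMod p) : wfun p m * (starRingEnd ℂ) (wfun p m) = 1 := by
  rw [wfun]
  split
  · exact alpha_mul_conj p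
  · simp

lemma wfun_eq (n : ZMod p) :
    wfun p n = (alphaQ p + 1)/2 + ((alphaQ p - 1)/2) * (chi p n + deltaf p n) := by
  rcases eq_or_ne n 0 with rfl | hn
  · rw [wfun, if_pos ⟨0, by ring⟩, deltaf, if_pos rfl, chi_zero]
    ring
  · rw [deltaf, if_neg hn, wfun]
    by_cases h : IsSquare n
    · rw [if_pos h, chi_isSquare p n hn h]; ring
    · rw [if_neg h, chi_not_isSquare p n h]; ring

lemma wfun_conj (n : ZMod p) : (starRingEnd ℂ) (wfun p n)
    = ((starRingEnd ℂ) (alphaQ p) + 1)/2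
      + (((starRingEnd ℂ) (alphaQ p) - 1)/2) * (chi p n + deltaf p n) := by
  rw [wfun_eq]
  have h1 := chi_conj p n
  have h2 : (starRingEnd ℂ) (deltaf p n) = deltaf p n := by
    rw [deltaf]; split <;> simp
  simp only [map_add, map_div₀, map_mul, map_sub, map_one, map_ofNat, h1, h2]

-- delta sums
lemma sum_delta : ∑ n : ZMod p, deltaf p n = 1 := by
  rw [show (1:ℂ) = deltaf p 0 by rw [deltaf, if_pos rfl]]
  apply Finset.sum_eq_single_of_mem _ (Finset.mem_univ _)
  intro b _ hb
  rw [deltaf, if_neg hb]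

lemma sum_g (hp4 : p % 4 = 3) : ∑ n : ZMod p, (chi p n + deltaf p n) = 1 := by
  rw [Finset.sum_add_distrib, chi_sum p hp4, sum_delta, zero_add]

lemma sum_chi_shift (hp4 : p % 4 = 3) (d : ZMod p) :
    ∑ n : ZMod p, chi p (n + d) = 0 := by
  rw [Fintype.sum_equiv (Equiv.addRight d) (fun n : ZMod p => chi p (n + d)) (chi p)
    (fun n => rfl)]
  exact chi_sum p hp4

lemma sum_delta_shift (d : ZMod p) :
    ∑ n : ZMod p, deltaf p (n + d) = 1 := by
  rw [Fintype.sum_equiv (Equiv.addRight d) (fun n : ZMod p => deltaf p (n + d)) (deltaf p)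
    (fun n => rfl)]
  exact sum_delta p

lemma sum_chi_delta (hp4 : p % 4 = 3) (d : ZMod p) :
    ∑ n : ZMod p, chi p n * deltaf p (n + d) = chi p (-d) := by
  rw [show chi p (-d) = chi p (-d) * deltaf p ((-d) + d) by
    rw [neg_add_cancel, deltaf, if_pos rfl, mul_one]]
  apply Finset.sum_eq_single_of_mem _ (Finset.mem_univ _)
  intro b _ hb
  have : b + d ≠ 0 := fun h => hb (by linear_combination h)
  rw [deltaf, if_neg this, mul_zero]

lemma sum_delta_chi (d : ZMod p) :
    ∑ n : ZMod p, deltaf p n * chi p (n + d) = chi p d := by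
  rw [show chi p d = deltaf p 0 * chi p (0 + d) by
    rw [zero_add, deltaf, if_pos rfl, one_mul]]
  apply Finset.sum_eq_single_of_mem _ (Finset.mem_univ _)
  intro b _ hb
  rw [deltaf, if_neg hb, zero_mul]

lemma sum_gg (hp4 : p % 4 = 3) (d : ZMod p) :
    ∑ n : ZMod p, (chi p n + deltaf p n) * (chi p (n + d) + deltaf p (n + d))
      = if d = 0 then (p : ℂ) else -1 := by
  rcases eq_or_ne d 0 with rfl | hd
  · rw [if_pos rfl]
    have hterm : ∀ n : ZMod p,
        (chi p n + deltaf p n) * (chi p (n + 0) + deltaf p (n + 0)) = 1 := by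
      intro n
      rw [add_zero]
      rcases eq_or_ne n 0 with rfl | hn
      · rw [chi_zero, deltaf, if_pos rfl]; ring
      · rw [deltaf, if_neg hn]
        have := chi_sq p n hn
        linear_combination this
    rw [Finset.sum_congr rfl (fun n _ => hterm n), Finset.sum_const, Finset.card_univ,
      ZMod.card, nsmul_eq_mul, mul_one]
  · rw [if_neg hd]
    have hterm : ∀ n : ZMod p,
        (chi p n + deltaf p n) * (chi p (n + d) + deltaf p (n + d))
        = chi p n * chi p (n + d) + chi p n * deltaf p (n + d)
          + deltaf p n * chi p (n + d) + deltaf p n * deltaf p (n + d) := fun n => by ring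
    rw [Finset.sum_congr rfl (fun n _ => hterm n)]
    simp only [Finset.sum_add_distrib]
    rw [chi_corr p hp4 d hd, sum_chi_delta p hp4 d, sum_delta_chi p d]
    have hdd : ∑ n : ZMod p, deltaf p n * deltaf p (n + d) = 0 := by
      apply Finset.sum_eq_zero
      intro n _
      rcases eq_or_ne n 0 with rfl | hn
      · rw [deltaf, show (0:ZMod p) + d = d by ring, deltaf, if_neg hd, mul_zero]
      · rw [deltaf, if_neg hn, zero_mul]
    rw [hdd]
    have : chi p (-d) = - chi p d := by
      rw [show -d = (-1) * d by ring, chi_mul, chi_neg_one p hp4]; ring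
    rw [this]; ring

/-- Main autocorrelation lemma. -/
lemma auto_corr (hp4 : p % 4 = 3) (d : ZMod p) :
    ∑ n : ZMod p, (starRingEnd ℂ) (wfun p n) * wfun p (n + d)
      = if d = 0 then (p : ℂ) else 0 := by
  set α := alphaQ p
  set cα := (starRingEnd ℂ) (alphaQ p) with hcα
  have hterm : ∀ n : ZMod p, (starRingEnd ℂ) (wfun p n) * wfun p (n + d)
      = ((cα + 1)/2) * ((α + 1)/2)
        + ((cα + 1)/2) * ((α - 1)/2) * (chi p (n+d) + deltaf p (n+d))
        + ((cα - 1)/2) * ((α + 1)/2) * (chi p n + deltaf p n)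
        + ((cα - 1)/2) * ((α - 1)/2)
            * ((chi p n + deltaf p n) * (chi p (n+d) + deltaf p (n+d))) := by
    intro n
    rw [wfun_conj, wfun_eq]
    ring
  rw [Finset.sum_congr rfl (fun n _ => hterm n)]
  simp only [Finset.sum_add_distrib, ← Finset.mul_sum]
  rw [chi_sum p hp4, sum_delta p, sum_chi_shift p hp4 d, sum_delta_shift p d,
    sum_gg p hp4 d, Finset.sum_const, Finset.card_univ, ZMod.card, nsmul_eq_mul]
  have h1 : α * cα = 1 := alpha_mul_conj p
  have h2 : ((p:ℂ) + 1) * (α + cα) = -2 * ((p:ℂ) - 1) := alpha_add_conj p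
  rcases eq_or_ne d 0 with rfl | hd
  · rw [if_pos rfl, if_pos rfl]
    linear_combination (((p:ℂ))+1)/2 * h1
  · rw [if_neg hd, if_neg hd]
    linear_combination (((p:ℂ))+1)/4 * h1 + (1/4 : ℂ) * h2

/-- Fourier magnitude lemma. -/
lemma fourier_mag (hp4 : p % 4 = 3) (t : ZMod p) :
    (∑ m : ZMod p, wfun p m * Efun p (t * m))
      * (starRingEnd ℂ) (∑ n : ZMod p, wfun p n * Efun p (t * n)) = (p : ℂ) := by
  rw [map_sum]
  rw [Finset.sum_mul_sum]
  have hterm : ∀ m n : ZMod p,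
      (wfun p m * Efun p (t * m)) * (starRingEnd ℂ) (wfun p n * Efun p (t * n))
      = (starRingEnd ℂ) (wfun p n) * wfun p m * Efun p (t * (m - n)) := by
    intro m n
    rw [map_mul, Efun_conj, show t * (m - n) = t * m + -(t * n) by ring, Efun_add]
    ring
  rw [Finset.sum_congr rfl fun m _ => Finset.sum_congr rfl fun n _ => hterm m n]
  rw [Finset.sum_comm]
  have hinner : ∀ n : ZMod p,
      ∑ m : ZMod p, (starRingEnd ℂ) (wfun p n) * wfun p m * Efun p (t * (m - n))
      = ∑ d : ZMod p, (starRingEnd ℂ) (wfun p n) * wfun p (n + d) * Efun p (t * d) := by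
    intro n
    symm
    apply Fintype.sum_equiv (Equiv.addLeft n)
    intro d
    simp only [Equiv.coe_addLeft]
    rw [show (n + d) - n = d by ring]
  rw [Finset.sum_congr rfl (fun n _ => hinner n)]
  rw [Finset.sum_comm]
  have houter : ∀ d : ZMod p,
      ∑ n : ZMod p, (starRingEnd ℂ) (wfun p n) * wfun p (n + d) * Efun p (t * d)
      = (if d = 0 then (p:ℂ) else 0) * Efun p (t * d) := by
    intro d
    rw [← Finset.sum_mul, auto_corr p hp4 d]
  rw [Finset.sum_congr rfl (fun d _ => houter d)]
  rw [Finset.sum_eq_single_of_mem (0 : ZMod p) (Finset.mem_univ _)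
    (fun b _ hb => by rw [if_neg hb, zero_mul])]
  rw [if_pos rfl, mul_zero, Efun_zero, mul_one]


end zm

lemma abs_sq_of_mul_conj {z : ℂ} {r : ℝ} (h : z * (starRingEnd ℂ) z = (r : ℂ)) :
    ‖z‖ ^ 2 = r := by
  rw [Complex.sq_norm, ← Complex.ofReal_inj, ← Complex.mul_conj, h]

theorem stmt_5 (p : ℕ) (hp : p.Prime) (hp4 : p % 4 = 3) :
    ∃ B : OrthonormalBasis (Fin p) ℂ (EuclideanSpace ℂ (Fin p)),
      (∀ k : Fin p, B k = ((Real.sqrt p : ℂ))⁻¹ • cyclicShift k (vQ p)) ∧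
      (∀ j k : Fin p,
        ‖⟪EuclideanSpace.single j (1 : ℂ), B k⟫‖ ^ 2 = 1 / p) ∧
      (∀ j k : Fin p, ‖⟪fourierVec p j, B k⟫‖ ^ 2 = 1 / p) := by
  obtain ⟨q, rfl⟩ : ∃ q, p = q + 1 := ⟨p - 1, by omega⟩
  set P := q + 1 with hP
  haveI : Fact (Nat.Prime P) := ⟨hp⟩
  set s : ℂ := ((Real.sqrt P : ℝ) : ℂ) with hs
  have hs2 : s ^ 2 = (P : ℂ) := sqrt_sq P
  have hp0 : (P : ℂ) ≠ 0 := Nat.cast_ne_zero.mpr (by omega)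
  have hs0 : s ≠ 0 := by
    intro h; rw [h] at hs2; simp at hs2; exact hp0 hs2.symm
  have hsc : (starRingEnd ℂ) s = s := Complex.conj_ofReal _
  have hsinvc : (starRingEnd ℂ) s⁻¹ = s⁻¹ := by rw [map_inv₀, hsc]
  -- bridge between vQ and wfun
  have bridge : ∀ n : Fin P, vQ P n = wfun P (show ZMod P from n) := by
    intro n
    rw [vQ, wfun]
    simp only [WithLp.ofLp_toLp]
    have : ((n : ℕ) ∈ Qres P) ↔ IsSquare (show ZMod P from n) :=
      mem_Qres_iff P (show ZMod P from n)
    split_ifs with h1 h2 h2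
    · rfl
    · exact absurd (this.mp h1) h2
    · exact absurd (this.mpr h2) h1
    · rfl
  -- the candidate vectors
  set b : Fin P → EuclideanSpace ℂ (Fin P) :=
    fun k => (s)⁻¹ • cyclicShift k (vQ P) with hb
  -- pointwise formula
  have hbapp : ∀ (k n : Fin P), b k n = s⁻¹ * wfun P ((show ZMod P from n) - (show ZMod P from k)) := by
    intro k n
    simp only [hb, cyclicShift, WithLp.ofLp_smul, WithLp.ofLp_toLp, Pi.smul_apply, smul_eq_mul]
    rw [bridge (n - k)]
    rfl
  -- inner products between shifted vectors
  have hinner : ∀ k l : Fin P, ⟪b k, b l⟫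
      = if (show ZMod P from k) = (show ZMod P from l) then (1:ℂ) else 0 := by
    intro k l
    have h1 : ⟪b k, b l⟫ = ∑ n : ZMod P,
        (starRingEnd ℂ) (b k n) * (b l n) := by
      simp only [PiLp.inner_apply, RCLike.inner_apply']; rfl
    rw [h1]
    have h2 : ∀ n : ZMod P,
        (starRingEnd ℂ) (b k n) * (b l n)
        = s⁻¹ * s⁻¹ * ((starRingEnd ℂ) (wfun P (n - (show ZMod P from k))) * wfun P (n - (show ZMod P from l))) := by
      intro n
      rw [hbapp k n, hbapp l n, map_mul, hsinvc]
      ring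
    rw [Finset.sum_congr rfl (fun n _ => h2 n), ← Finset.mul_sum]
    have h3 : ∑ n : ZMod P, (starRingEnd ℂ) (wfun P (n - (show ZMod P from k))) * wfun P (n - (show ZMod P from l))
        = ∑ m : ZMod P, (starRingEnd ℂ) (wfun P m)
            * wfun P (m + ((show ZMod P from k) - (show ZMod P from l))) := by
      symm
      apply Fintype.sum_equiv (Equiv.addRight (show ZMod P from k))
      intro m
      show _ = (starRingEnd ℂ) (wfun P (m + (show ZMod P from k) - (show ZMod P from k))) * wfun P (m + (show ZMod P from k) - (show ZMod P from l))
      rw [show m + (show ZMod P from k) - (show ZMod P from k) = m by ring,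
        show m + (show ZMod P from k) - (show ZMod P from l)
          = m + ((show ZMod P from k) - (show ZMod P from l)) by ring]
    rw [h3, auto_corr P hp4 _]
    rcases eq_or_ne (show ZMod P from k) (show ZMod P from l) with he | he
    · rw [if_pos (sub_eq_zero.mpr he), if_pos he]
      have hq : s⁻¹ * s⁻¹ * (P:ℂ) = (P:ℂ) * (s^2)⁻¹ := by ring
      rw [hq, hs2]
      exact mul_inv_cancel₀ hp0
    · rw [if_neg (sub_ne_zero.mpr he), if_neg he]
      rw [mul_zero]
  -- orthonormality
  have hon : Orthonormal ℂ b := by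
    rw [orthonormal_iff_ite]
    intro k l
    rw [hinner k l]
    exact rfl
  -- span
  have hsp : ⊤ ≤ Submodule.span ℂ (Set.range b) := by
    have hli := hon.linearIndependent
    have hcard : Fintype.card (Fin P) = Module.finrank ℂ (EuclideanSpace ℂ (Fin P)) := by
      simp [finrank_euclideanSpace]
    exact le_of_eq (hli.span_eq_top_of_card_eq_finrank hcard).symm
  refine ⟨OrthonormalBasis.mk hon hsp, ?_, ?_, ?_⟩
  · intro k; rw [OrthonormalBasis.coe_mk]
  · intro j k
    rw [OrthonormalBasis.coe_mk]
    have h1 : ⟪EuclideanSpace.single j (1:ℂ), b k⟫ = b k j := by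
      rw [EuclideanSpace.inner_single_left, map_one, one_mul]
    rw [h1, hbapp k j]
    apply abs_sq_of_mul_conj
    rw [map_mul, hsinvc]
    have hW := wfun_mul_conj P ((show ZMod P from j) - (show ZMod P from k))
    have hcalc : s⁻¹ * wfun P ((show ZMod P from j) - (show ZMod P from k))
        * (s⁻¹ * (starRingEnd ℂ) (wfun P ((show ZMod P from j) - (show ZMod P from k))))
        = (wfun P ((show ZMod P from j) - (show ZMod P from k))
            * (starRingEnd ℂ) (wfun P ((show ZMod P from j) - (show ZMod P from k)))) * (s^2)⁻¹ := by
      ring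
    rw [hcalc, hW, one_mul, hs2]
    push_cast
    ring
  · intro j k
    rw [OrthonormalBasis.coe_mk]
    -- compute the inner product
    have hEjn : ∀ n : Fin P, (fourierVec P j) n
        = Efun P ((show ZMod P from j) * (show ZMod P from n)) / s := by
      intro n
      rw [fourierVec]
      simp only [WithLp.ofLp_toLp]
      congr 1
      rw [← Efun_natCast P ((j:ℕ) * (n:ℕ))]
      congr 1
    have h1 : ⟪fourierVec P j, b k⟫ = ∑ n : ZMod P,
        (starRingEnd ℂ) ((fourierVec P j) n) * (b k n) := by
        simp only [PiLp.inner_apply, RCLike.inner_apply']; rfl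
    set jz := (show ZMod P from j) with hjz
    set kz := (show ZMod P from k) with hkz
    have h2 : ∀ n : ZMod P,
        (starRingEnd ℂ) ((fourierVec P j) n) * (b k n)
        = s⁻¹ * s⁻¹ * (Efun P (-(jz * n)) * wfun P (n - kz)) := by
      intro n
      rw [hEjn n, hbapp k n, map_div₀, Efun_conj, hsc]
      ring
    rw [h1, Finset.sum_congr rfl (fun n _ => h2 n), ← Finset.mul_sum]
    have h3 : ∑ n : ZMod P, Efun P (-(jz * n)) * wfun P (n - kz)
        = Efun P (-(jz * kz)) * ∑ m : ZMod P, wfun P m * Efun P ((-jz) * m) := by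
      rw [Finset.mul_sum]
      symm
      apply Fintype.sum_equiv (Equiv.addRight kz)
      intro m
      simp only [Equiv.coe_addRight]
      rw [show m + kz - kz = m by ring,
        show -(jz * (m + kz)) = (-jz) * m + -(jz * kz) by ring, Efun_add]
      ring
    rw [h3]
    apply abs_sq_of_mul_conj
    have hfm := fourier_mag P hp4 (-jz)
    have hE := Efun_mul_conj P (-(jz * kz))
    set S' : ℂ := ∑ m : ZMod P, wfun P m * Efun P ((-jz) * m) with hS'
    set E' : ℂ := Efun P (-(jz * kz)) with hE'
    rw [map_mul, map_mul, map_mul, hsinvc]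
    have hcalc : s⁻¹ * s⁻¹ * (E' * S') * (s⁻¹ * s⁻¹ * ((starRingEnd ℂ) E' * (starRingEnd ℂ) S'))
        = (E' * (starRingEnd ℂ) E') * (S' * (starRingEnd ℂ) S') * ((s^2)⁻¹ * (s^2)⁻¹) := by
      ring
    rw [hcalc, hE, one_mul, hfm, hs2]
    push_cast
    field_simp
end zm
end

section
/- Let p be a prime with p ≡ 1 (mod 4), let z₀ = cos θ + i sin θ where cos θ = (√p − 1)/(p − 1) and sin θ = √(1 − cos²θ) ≥ 0, and let v ∈ ℂ^p be defined by v₀ = 1, v_m = z₀ for m ∈ Q*, and v_m = conj(z₀) for m ∈ N. Then for every integer j, |Σ_{m=0}^{p−1} v_m ω_p^{−jm}|² = p; equivalently, the unit vector (1/√p)·v is unbiased to the Fourier basis of ℂ^p. -/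
open scoped Classical

/-- The nonzero quadratic residues modulo `p`, viewed inside `{1, …, p-1}`:
`m ∈ Q*` iff `m ≢ 0 (mod p)` and `m ≡ x² (mod p)` for some integer `x`. -/
noncomputable def QresStar (p : ℕ) : Finset ℕ :=
  (Finset.range p).filter
    (fun m => ¬ ((p : ℤ) ∣ (m : ℤ)) ∧ ∃ x : ℤ, Int.ModEq (p : ℤ) (x ^ 2) (m : ℤ))

/-- `cos θ = (√p − 1)/(p − 1)`. -/
noncomputable def cosR (p : ℕ) : ℝ := (Real.sqrt p - 1) / ((p : ℝ) - 1)

/-- `sin θ = √(1 − cos²θ) ≥ 0`. -/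
noncomputable def sinR (p : ℕ) : ℝ := Real.sqrt (1 - cosR p ^ 2)

/-- `z₀ = cos θ + i sin θ`. -/
noncomputable def z0 (p : ℕ) : ℂ := (cosR p : ℂ) + (sinR p : ℂ) * Complex.I

/-- The entries of `v ∈ ℂ^p`: `v₀ = 1`, `v_m = z₀` for `m ∈ Q*`, `v_m = conj z₀`
for `m ∈ N`. -/
noncomputable def vEntry (p : ℕ) (m : ℕ) : ℂ :=
  if m = 0 then 1 else if m ∈ QresStar p then z0 p else starRingEnd ℂ (z0 p)

lemma omegaRoot_prim {p : ℕ} (hp : p ≠ 0) : IsPrimitiveRoot (omegaRoot p) p :=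
  Complex.isPrimitiveRoot_exp p hp

lemma omegaRoot_pow {p : ℕ} (hp : p ≠ 0) : omegaRoot p ^ p = 1 :=
  (omegaRoot_prim hp).pow_eq_one

lemma omegaRoot_zpow {p : ℕ} [NeZero p] (k : ℤ) :
    omegaRoot p ^ k = omegaRoot p ^ ((k : ZMod p)).val := by
  have hp : p ≠ 0 := NeZero.ne p
  have hω : omegaRoot p ≠ 0 := Complex.exp_ne_zero _
  obtain ⟨q, hq⟩ : (p : ℤ) ∣ k - (((k : ZMod p)).val : ℤ) := by
    rw [← ZMod.intCast_zmod_eq_zero_iff_dvd]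
    push_cast
    simp [ZMod.natCast_val, ZMod.cast_id]
  have hk : k = (((k : ZMod p)).val : ℤ) + p * q := by linarith
  nth_rewrite 1 [hk]
  rw [zpow_add₀ hω, zpow_natCast]
  have : omegaRoot p ^ ((p : ℤ) * q) = 1 := by
    rw [zpow_mul, zpow_natCast, omegaRoot_pow hp, one_zpow]
  rw [this, mul_one]

lemma sum_range_eq_sum_zmod {p : ℕ} [NeZero p] (f : ZMod p → ℂ) :
    ∑ m ∈ Finset.range p, f (m : ZMod p) = ∑ a : ZMod p, f a := by
  refine Finset.sum_nbij' (fun m => (m : ZMod p)) (fun a => a.val) ?_ ?_ ?_ ?_ ?_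
  · intro a _; exact Finset.mem_univ _
  · intro a _; exact Finset.mem_range.mpr (ZMod.val_lt a)
  · intro a ha; exact ZMod.val_natCast_of_lt (Finset.mem_range.mp ha)
  · intro a _; exact ZMod.natCast_rightInverse a
  · intro m _; rfl

lemma vEntry_eq {p : ℕ} [Fact p.Prime] {m : ℕ} (hm0 : m ≠ 0) (hmp : m < p) :
    vEntry p m = (cosR p : ℂ) + (sinR p : ℂ) * Complex.I *
      ((quadraticChar (ZMod p) (m : ZMod p) : ℤ) : ℂ) := by
  have hmz : ((m : ℕ) : ZMod p) ≠ 0 := by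
    rw [Ne, ZMod.natCast_eq_zero_iff]
    exact fun h => hm0 (Nat.eq_zero_of_dvd_of_lt h hmp)
  rw [vEntry, if_neg hm0]
  by_cases hQ : m ∈ QresStar p
  · rw [if_pos hQ]
    obtain ⟨-, -, x, hx⟩ := Finset.mem_filter.mp hQ
    have hsq : IsSquare ((m : ℕ) : ZMod p) := by
      refine ⟨(x : ZMod p), ?_⟩
      have : ((x ^ 2 : ℤ) : ZMod p) = ((m : ℤ) : ZMod p) :=
        (ZMod.intCast_eq_intCast_iff _ _ _).mpr hx
      push_cast at this
      rw [← this]; ring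
    rw [(quadraticChar_one_iff_isSquare hmz).mpr hsq]
    simp [z0]
  · rw [if_neg hQ]
    have hnsq : ¬ IsSquare ((m : ℕ) : ZMod p) := by
      intro ⟨r, hr⟩
      refine hQ (Finset.mem_filter.mpr ⟨Finset.mem_range.mpr hmp, ?_, (r.val : ℤ), ?_⟩)
      · intro h
        exact hm0 (Nat.eq_zero_of_dvd_of_lt (Int.ofNat_dvd.mp h) hmp)
      · rw [← ZMod.intCast_eq_intCast_iff]
        push_cast
        rw [ZMod.natCast_val, ZMod.cast_id, hr]; ring
    rw [quadraticChar_neg_one_iff_not_isSquare.mpr hnsq]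
    simp [z0, map_add, map_mul, Complex.conj_ofReal, Complex.conj_I]

theorem stmt_8 (p : ℕ) (hp : p.Prime) (hp4 : p % 4 = 1) (j : ℤ) :
    ‖∑ m ∈ Finset.range p,
        vEntry p m * omegaRoot p ^ (-(j * (m : ℤ)))‖ ^ 2 = p := by
  haveI : Fact p.Prime := ⟨hp⟩
  have hp5 : 5 ≤ p := by have := hp.two_le; omega
  have hp0 : p ≠ 0 := by omega
  haveI : NeZero p := ⟨hp0⟩
  have hp2 : p ≠ 2 := by omega
  have hringchar : ringChar (ZMod p) ≠ 2 := by
    rw [ZMod.ringChar_zmod_n]; exact hp2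
  set ω := omegaRoot p with hωdef
  have hω1 : ω ^ p = 1 := omegaRoot_pow hp0
  set ψ : AddChar (ZMod p) ℂ := AddChar.zmodChar p hω1 with hψdef
  have hψ_prim : ψ.IsPrimitive :=
    AddChar.zmodChar_primitive_of_primitive_root p (omegaRoot_prim hp0)
  set χ : MulChar (ZMod p) ℂ := (quadraticChar (ZMod p)).ringHomComp (Int.castRingHom ℂ)
    with hχdef
  have hχ_apply : ∀ a : ZMod p, χ a = ((quadraticChar (ZMod p) a : ℤ) : ℂ) := fun a => rfl
  have hχ_ne_one : χ ≠ 1 :=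
    (MulChar.ringHomComp_ne_one_iff (Int.cast_injective)).mpr (quadraticChar_ne_one hringchar)
  have hχ_quad : χ.IsQuadratic := (quadraticChar_isQuadratic (ZMod p)).comp _
  -- real facts
  set t := Real.sqrt p with htdef
  have ht2 : t ^ 2 = p := Real.sq_sqrt (by positivity)
  have ht1 : 1 < t := by
    have h1 : Real.sqrt 1 < Real.sqrt p :=
      Real.sqrt_lt_sqrt (by norm_num) (by exact_mod_cast (by omega : 1 < p))
    simpa using h1
  set c := cosR p with hcdef
  have hc1 : c * (t + 1) = 1 := by
    have hp1 : (p : ℝ) - 1 ≠ 0 := by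
      have : (5 : ℝ) ≤ p := by exact_mod_cast hp5
      linarith
    rw [hcdef, cosR, div_mul_eq_mul_div, div_eq_one_iff_eq hp1]
    linear_combination ht2
  have hcle : c ^ 2 ≤ 1 := by nlinarith [hc1, ht1]
  set s := sinR p with hsdef
  have hs2 : s ^ 2 = 1 - c ^ 2 := Real.sq_sqrt (by linarith)
  -- the sum
  set b : ZMod p := ((-j : ℤ) : ZMod p) with hbdef
  have hωψ : ∀ m : ℕ, ω ^ (-(j * (m : ℤ))) = ψ (b * (m : ZMod p)) := by
    intro m
    rw [hωdef, omegaRoot_zpow, hψdef, AddChar.zmodChar_apply]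
    congr 2
    rw [hbdef]
    push_cast
    ring
  have hterm : ∀ m ∈ Finset.range p, vEntry p m * ω ^ (-(j * (m : ℤ)))
      = (if m = 0 then (1 - (c : ℂ)) else 0)
        + ((c : ℂ) + (s : ℂ) * Complex.I * χ ((m : ZMod p))) * ψ (b * (m : ZMod p)) := by
    intro m hm
    rcases eq_or_ne m 0 with rfl | hm0
    · have hχ0 : χ (0 : ZMod p) = 0 := χ.map_nonunit not_isUnit_zero
      simp [vEntry, hχ0, AddChar.map_zero_eq_one]
    · rw [if_neg hm0, hωψ m, vEntry_eq hm0 (Finset.mem_range.mp hm), zero_add,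
        ← hχ_apply]
  rw [Finset.sum_congr rfl hterm, Finset.sum_add_distrib, Finset.sum_ite_eq'
    (Finset.range p) 0 (fun _ => (1 - (c : ℂ))),
    if_pos (Finset.mem_range.mpr (by omega : 0 < p))]
  rw [sum_range_eq_sum_zmod
    (fun a => ((c : ℂ) + (s : ℂ) * Complex.I * χ a) * ψ (b * a))]
  have hsum2 : ∑ a : ZMod p, ((c : ℂ) + (s : ℂ) * Complex.I * χ a) * ψ (b * a)
      = (c : ℂ) * (∑ a : ZMod p, ψ (b * a))
        + (s : ℂ) * Complex.I * gaussSum χ (ψ.mulShift b) := by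
    rw [gaussSum, Finset.mul_sum, Finset.mul_sum, ← Finset.sum_add_distrib]
    refine Finset.sum_congr rfl fun a _ => ?_
    rw [AddChar.mulShift_apply]
    ring
  rw [hsum2]
  by_cases hb : b = 0
  · -- j ≡ 0 mod p
    have hA : (∑ a : ZMod p, ψ (b * a)) = (p : ℂ) := by
      simp [hb, AddChar.map_zero_eq_one, Finset.card_univ, ZMod.card]
    have hT : gaussSum χ (ψ.mulShift b) = 0 := by
      rw [gaussSum]
      have : ∀ a : ZMod p, χ a * (ψ.mulShift b) a = χ a := by
        intro a
        rw [AddChar.mulShift_apply, hb, zero_mul, AddChar.map_zero_eq_one, mul_one]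
      rw [Finset.sum_congr rfl fun a _ => this a]
      have hz : (∑ a : ZMod p, quadraticChar (ZMod p) a) = 0 :=
        quadraticChar_sum_zero hringchar
      have h2 : ∑ a : ZMod p, χ a = ∑ a : ZMod p, ((quadraticChar (ZMod p) a : ℤ) : ℂ) :=
        Finset.sum_congr rfl fun a _ => hχ_apply a
      rw [h2, ← Int.cast_sum, hz, Int.cast_zero]
    rw [hA, hT, mul_zero, add_zero]
    have hreal : 1 - c + c * (p : ℝ) = t := by linear_combination (-c) * ht2 + (t - 1) * hc1
    have hC : (1 - (c : ℂ)) + (c : ℂ) * (p : ℂ) = ((t : ℝ) : ℂ) := by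
      exact_mod_cast congrArg Complex.ofReal hreal
    rw [hC, Complex.norm_real, Real.norm_eq_abs, abs_of_nonneg (by linarith : (0:ℝ) ≤ t), ht2]
  · -- j ≢ 0 mod p
    have hA : (∑ a : ZMod p, ψ (b * a)) = 0 := by
      have hne : ψ.mulShift b ≠ 0 := fun h => hψ_prim hb (by rw [h]; rfl)
      have := AddChar.sum_eq_zero_iff_ne_zero.mpr hne
      rw [← this]
      exact Finset.sum_congr rfl fun a _ => (AddChar.mulShift_apply).symm
    rw [hA, mul_zero, zero_add]
    set T := gaussSum χ (ψ.mulShift b) with hTdef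
    have hbu : IsUnit b := isUnit_iff_ne_zero.mpr hb
    have hmul : χ b * T = gaussSum χ ψ := by
      have := gaussSum_mulShift χ ψ hbu.unit
      rwa [IsUnit.unit_spec] at this
    have hχb2 : χ b ^ 2 = 1 := by
      rw [hχ_apply, ← Int.cast_pow, quadraticChar_sq_one hb, Int.cast_one]
    have hχm1 : χ (-1) = 1 := by
      rw [hχ_apply]
      have hsq : IsSquare (-1 : ZMod p) := (ZMod.exists_sq_eq_neg_one_iff).mpr (by omega)
      have hne : (-1 : ZMod p) ≠ 0 := neg_ne_zero.mpr one_ne_zero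
      rw [(quadraticChar_one_iff_isSquare hne).mpr hsq, Int.cast_one]
    have hG2 : gaussSum χ ψ ^ 2 = (p : ℂ) := by
      rw [gaussSum_sq hχ_ne_one hχ_quad hψ_prim, hχm1, one_mul, ZMod.card]
    have hT2 : T ^ 2 = (p : ℂ) := by
      have h := congrArg (· ^ 2) hmul
      simp only [mul_pow] at h
      rw [hχb2, one_mul] at h
      rw [h, hG2]
    have htC : ((t : ℝ) : ℂ) ^ 2 = (p : ℂ) := by
      exact_mod_cast congrArg Complex.ofReal ht2
    have hfac : (T - ((t : ℝ) : ℂ)) * (T + ((t : ℝ) : ℂ)) = 0 := by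
      linear_combination hT2 - htC
    have hgoal : ∀ ε : ℝ, ε = 1 ∨ ε = -1 →
        ‖(1 - (c : ℂ)) + (s : ℂ) * Complex.I * ((ε * t : ℝ) : ℂ)‖ ^ 2 = p := by
      intro ε hε
      have hform : (1 - (c : ℂ)) + (s : ℂ) * Complex.I * ((ε * t : ℝ) : ℂ)
          = (((1 - c : ℝ)) : ℂ) + ((s * (ε * t) : ℝ) : ℂ) * Complex.I := by
        push_cast; ring
      rw [hform, Complex.sq_norm, Complex.normSq_add_mul_I]
      have hε2 : ε ^ 2 = 1 := by rcases hε with rfl | rfl <;> norm_num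
      linear_combination (s * t) ^ 2 * hε2 + t ^ 2 * hs2 + ht2 + (-(1 - c + c * t)) * hc1
    rcases mul_eq_zero.mp hfac with h | h
    · rw [sub_eq_zero] at h
      rw [h]
      have := hgoal 1 (Or.inl rfl)
      simpa using this
    · rw [add_eq_zero_iff_eq_neg] at h
      rw [h]
      have := hgoal (-1) (Or.inr rfl)
      simpa using this
end

section
/- Let p be a prime with p ≡ 1 (mod 4), let z₀ = cos θ + i sin θ where cos θ = (√p − 1)/(p − 1) and sin θ = √(1 − cos²θ) ≥ 0, and let v ∈ ℂ^p be defined by v₀ = 1, v_m = z₀ for m ∈ Q*, and v_m = conj(z₀) for m ∈ N. Then the p vectors (1/√p)·v^(k), k = 0,…,p−1, form an orthonormal basis of ℂ^p that is mutually unbiased to the standard basis of ℂ^p and mutually unbiased to the Fourier basis of ℂ^p. -/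
set_option linter.unusedSectionVars false
set_option linter.unusedVariables false
set_option maxHeartbeats 1000000

open scoped ComplexInnerProductSpace Classical

/-- The vector `v ∈ ℂ^p`: `v₀ = 1`, `v_m = z₀` for `m ∈ Q*`, `v_m = conj z₀`
for `m ∈ N`. -/
noncomputable def vStar (p : ℕ) : EuclideanSpace ℂ (Fin p) :=
  WithLp.toLp 2 (fun m =>
    if (m : ℕ) = 0 then 1
    else if (m : ℕ) ∈ QresStar p then z0 p else starRingEnd ℂ (z0 p))


namespace StmtAux

open Complex

variable {p : ℕ}

instance (priority := 100) instNZ [hp : Fact p.Prime] : NeZero p := ⟨hp.out.ne_zero⟩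

lemma omega_prim (hp : p ≠ 0) : IsPrimitiveRoot (omegaRoot p) p :=
  Complex.isPrimitiveRoot_exp p hp

noncomputable def psi (p : ℕ) [NeZero p] : AddChar (ZMod p) ℂ :=
  AddChar.zmodChar p (ζ := omegaRoot p) ((omega_prim (NeZero.ne p)).pow_eq_one)

section psi
variable [NeZero p]

lemma psi_apply (x : ZMod p) : psi p x = omegaRoot p ^ x.val :=
  AddChar.zmodChar_apply _ _

lemma psi_nat (n : ℕ) : psi p ((n : ZMod p)) = omegaRoot p ^ n :=
  AddChar.zmodChar_apply' _ n

lemma psi_neg_mul (x : ZMod p) : psi p (-x) * psi p x = 1 := by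
  rw [← AddChar.map_add_eq_mul, neg_add_cancel, AddChar.map_zero_eq_one]

lemma omega_conj : (starRingEnd ℂ) (omegaRoot p) = (omegaRoot p)⁻¹ := by
  have h : (2 * (Real.pi : ℂ) * Complex.I / (p : ℂ)) = ((2 * Real.pi / p : ℝ) : ℂ) * Complex.I := by
    push_cast; ring
  unfold omegaRoot
  rw [h, ← Complex.exp_conj, ← Complex.exp_neg]
  congr 1
  rw [map_mul, Complex.conj_ofReal, Complex.conj_I]
  ring

lemma conj_psi (x : ZMod p) : (starRingEnd ℂ) (psi p x) = psi p (-x) := by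
  have h2 : psi p (-x) = (psi p x)⁻¹ := eq_inv_of_mul_eq_one_left (psi_neg_mul x)
  rw [h2, psi_apply, map_pow, omega_conj, inv_pow]

end psi

section chi
variable [hpF : Fact p.Prime]

noncomputable def chi (p : ℕ) [Fact p.Prime] : MulChar (ZMod p) ℂ :=
  (quadraticChar (ZMod p)).ringHomComp (Int.castRingHom ℂ)

lemma chi_apply (a : ZMod p) : chi p a = ((quadraticChar (ZMod p) a : ℤ) : ℂ) :=
  MulChar.ringHomComp_apply _ _ _

lemma conj_chi (a : ZMod p) : (starRingEnd ℂ) (chi p a) = chi p a := by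
  rw [chi_apply, map_intCast]

lemma chi_zero : chi p 0 = 0 := by
  rw [chi_apply, quadraticChar_zero, Int.cast_zero]

lemma ringChar_ne_two (hp4 : p % 4 = 1) : ringChar (ZMod p) ≠ 2 := by
  rw [ZMod.ringChar_zmod_n]; omega

lemma chi_ne_one (hp4 : p % 4 = 1) : chi p ≠ 1 :=
  (MulChar.ringHomComp_ne_one_iff (Int.cast_injective)).mpr
    (quadraticChar_ne_one (ringChar_ne_two hp4))

lemma chi_quad : (chi p).IsQuadratic :=
  (quadraticChar_isQuadratic (ZMod p)).comp _

lemma psi_prim : (psi p).IsPrimitive := by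
  apply AddChar.IsPrimitive.of_ne_one
  rw [AddChar.zmod_char_ne_one_iff]
  have h1 : (1 : ZMod p).val = 1 := by
    rw [ZMod.val_one_eq_one_mod]; exact Nat.mod_eq_of_lt (Fact.out (p := p.Prime)).one_lt
  rw [psi_apply, h1, pow_one]
  exact (omega_prim (NeZero.ne p)).ne_one (Fact.out (p := p.Prime)).one_lt

lemma neg_one_ne_zero' : (-1 : ZMod p) ≠ 0 := by
  haveI : Fact (1 < p) := ⟨(Fact.out (p := p.Prime)).one_lt⟩
  exact neg_ne_zero.mpr one_ne_zero

lemma chi_neg_one (hp4 : p % 4 = 1) : chi p (-1) = 1 := by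
  have hsq : IsSquare (-1 : ZMod p) := by
    rw [ZMod.exists_sq_eq_neg_one_iff]; omega
  rw [chi_apply, (quadraticChar_one_iff_isSquare neg_one_ne_zero').mpr hsq, Int.cast_one]

lemma chi_mul_self {a : ZMod p} (ha : a ≠ 0) : chi p a * chi p a = 1 := by
  have h := quadraticChar_sq_one (F := ZMod p) ha
  rw [chi_apply, ← Int.cast_mul, ← pow_two, h, Int.cast_one]

lemma chi_neg (hp4 : p % 4 = 1) (a : ZMod p) : chi p (-a) = chi p a := by
  rw [show (-a : ZMod p) = -1 * a by ring, map_mul, chi_neg_one hp4, one_mul]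

lemma sum_chi (hp4 : p % 4 = 1) : ∑ a : ZMod p, chi p a = 0 := by
  simp_rw [chi_apply]
  rw [← Int.cast_sum, quadraticChar_sum_zero (ringChar_ne_two hp4), Int.cast_zero]

noncomputable def gauss (p : ℕ) [Fact p.Prime] [NeZero p] : ℂ := gaussSum (chi p) (psi p)

lemma gauss_sq (hp4 : p % 4 = 1) : gauss p ^ 2 = p := by
  have h : gaussSum (chi p) (psi p) ^ 2 = chi p (-1) * (Fintype.card (ZMod p) : ℂ) :=
    gaussSum_sq (chi_ne_one hp4) chi_quad psi_prim
  rw [gauss, h, chi_neg_one hp4, one_mul, ZMod.card]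

lemma conj_gauss (hp4 : p % 4 = 1) : (starRingEnd ℂ) (gauss p) = gauss p := by
  rw [gauss, gaussSum, map_sum]
  calc ∑ a : ZMod p, (starRingEnd ℂ) (chi p a * psi p a)
      = ∑ a : ZMod p, chi p a * psi p (-a) := by
        refine Finset.sum_congr rfl fun a _ => ?_
        rw [map_mul, conj_chi, conj_psi]
    _ = ∑ a : ZMod p, chi p (-a) * psi p a := by
        refine Fintype.sum_equiv (Equiv.neg (ZMod p)) _ _ fun a => ?_
        simp only [Equiv.neg_apply, neg_neg]
    _ = ∑ a : ZMod p, chi p a * psi p a := by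
        refine Finset.sum_congr rfl fun a _ => ?_
        rw [chi_neg hp4]

lemma twist (hp4 : p % 4 = 1) {b : ZMod p} (hb : b ≠ 0) :
    ∑ a : ZMod p, chi p a * psi p (b * a) = chi p b * gauss p := by
  have hu' : IsUnit b := isUnit_iff_ne_zero.mpr hb
  have hw : (hu'.unit : ZMod p) = b := hu'.unit_spec
  have h := gaussSum_mulShift (chi p) (psi p) hu'.unit
  calc ∑ a : ZMod p, chi p a * psi p (b * a)
      = gaussSum (chi p) ((psi p).mulShift b) := by
        rw [gaussSum]
        refine Finset.sum_congr rfl fun a _ => ?_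
        rw [AddChar.mulShift_apply]
    _ = (chi p b * chi p b) * gaussSum (chi p) ((psi p).mulShift b) := by
        rw [chi_mul_self hb, one_mul]
    _ = chi p b * gauss p := by
        rw [gauss, ← hw, mul_assoc, h]

end chi






section numeric
variable [hpF : Fact p.Prime]

lemma p_five (hp4 : p % 4 = 1) : 5 ≤ p := by
  have := hpF.out.two_le; omega

lemma sqrt_sq : Real.sqrt p ^ 2 = (p : ℝ) := Real.sq_sqrt (by positivity)

lemma sqrt_ge_one : 1 ≤ Real.sqrt p := by
  have h2 := hpF.out.two_le
  have : (1:ℝ) ≤ (p:ℝ) := by exact_mod_cast Nat.one_le_of_lt h2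
  nlinarith [sqrt_sq (p := p), Real.sqrt_nonneg (p:ℝ)]

lemma pm1_pos : 0 < (p : ℝ) - 1 := by
  have h2 := hpF.out.two_le
  have : (2:ℝ) ≤ (p:ℝ) := by exact_mod_cast h2
  linarith

lemma cos_nonneg : 0 ≤ cosR p :=
  div_nonneg (by linarith [sqrt_ge_one (p := p)]) (le_of_lt pm1_pos)

lemma cos_le_one : cosR p ≤ 1 := by
  rw [cosR, div_le_one pm1_pos]
  nlinarith [sqrt_sq (p := p), sqrt_ge_one (p := p)]

lemma sin_sq : sinR p ^ 2 = 1 - cosR p ^ 2 := by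
  rw [sinR, Real.sq_sqrt]
  nlinarith [cos_nonneg (p := p), cos_le_one (p := p)]

lemma cos_key : cosR p * (Real.sqrt p + 1) = 1 := by
  rw [cosR, div_mul_eq_mul_div, div_eq_one_iff_eq (ne_of_gt pm1_pos)]
  nlinarith [sqrt_sq (p := p)]

lemma num_key : (1 - cosR p) ^ 2 + sinR p ^ 2 * p = p := by
  have h1 : 1 - cosR p = cosR p * Real.sqrt p := by linear_combination (-1 : ℝ) * cos_key (p := p)
  rw [sin_sq, h1]
  nlinarith [sqrt_sq (p := p)]

lemma num_V0 : ((p : ℝ) - 1) * cosR p + 1 = Real.sqrt p := by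
  have h : (p:ℝ) - 1 ≠ 0 := ne_of_gt pm1_pos
  rw [cosR]
  field_simp
  ring

end numeric

section bridge
variable [NeZero p]

/-- equivalence between `Fin p` and `ZMod p`. -/
def eqv (p : ℕ) [NeZero p] : Fin p ≃ ZMod p where
  toFun m := ((m : ℕ) : ZMod p)
  invFun a := ⟨a.val, a.val_lt⟩
  left_inv m := by
    ext
    simp [ZMod.val_natCast_of_lt m.isLt]
  right_inv a := by
    simp only []
    exact ZMod.natCast_rightInverse a

lemma c_add (a b : Fin p) :
    (((a + b : Fin p) : ℕ) : ZMod p) = ((a : ℕ) : ZMod p) + ((b : ℕ) : ZMod p) := by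
  rw [Fin.val_add, ZMod.natCast_mod, Nat.cast_add]

lemma c_sub (a b : Fin p) :
    (((a - b : Fin p) : ℕ) : ZMod p) = ((a : ℕ) : ZMod p) - ((b : ℕ) : ZMod p) := by
  have h := c_add (a - b) b
  rw [sub_add_cancel] at h
  rw [eq_sub_iff_add_eq, ← h]

end bridge
section vecs
variable [hpF : Fact p.Prime]

lemma mem_Qres_iff {m : ℕ} (hm : m < p) (hm0 : m ≠ 0) :
    m ∈ QresStar p ↔ IsSquare ((m : ℕ) : ZMod p) := by
  unfold QresStar
  simp only [Finset.mem_filter, Finset.mem_range]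
  constructor
  · rintro ⟨-, -, x, hx⟩
    have h := (ZMod.intCast_eq_intCast_iff _ _ _).mpr hx
    push_cast at h
    exact ⟨(x : ZMod p), by rw [← h]; ring⟩
  · rintro ⟨y, hy⟩
    refine ⟨hm, ?_, ⟨(y.val : ℤ), ?_⟩⟩
    · intro hdvd
      have hd : p ∣ m := by exact_mod_cast hdvd
      exact hm0 (Nat.eq_zero_of_dvd_of_lt hd hm)
    · rw [← ZMod.intCast_eq_intCast_iff]
      push_cast
      rw [ZMod.natCast_val, ZMod.cast_id, hy]
      ring

/-- the components of `vStar`, as a function on `ZMod p`. -/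
noncomputable def nw (p : ℕ) [Fact p.Prime] (a : ZMod p) : ℂ :=
  (cosR p : ℂ) + Complex.I * (sinR p : ℂ) * chi p a + (if a = 0 then 1 - (cosR p : ℂ) else 0)

lemma vStar_eq (m : Fin p) : vStar p m = nw p (((m : ℕ) : ZMod p)) := by
  unfold vStar nw
  simp only [WithLp.ofLp_toLp]
  by_cases h0 : (m : ℕ) = 0
  · rw [h0]
    simp [chi_zero]
  · have hm0 : (((m : ℕ) : ZMod p)) ≠ 0 := by
      intro h
      apply h0
      have hv := ZMod.val_natCast_of_lt m.isLt
      rw [h, ZMod.val_zero] at hv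
      exact hv.symm
    rw [if_neg h0, if_neg hm0]
    by_cases hq : (m : ℕ) ∈ QresStar p
    · have hsq : IsSquare (((m : ℕ) : ZMod p)) := (mem_Qres_iff m.isLt h0).mp hq
      have hχ : chi p (((m : ℕ) : ZMod p)) = 1 := by
        rw [chi_apply, (quadraticChar_one_iff_isSquare hm0).mpr hsq, Int.cast_one]
      rw [if_pos hq, hχ, z0]
      ring
    · have hsq : ¬ IsSquare (((m : ℕ) : ZMod p)) :=
        fun h => hq ((mem_Qres_iff m.isLt h0).mpr h)
      have hχ : chi p (((m : ℕ) : ZMod p)) = -1 := by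
        rw [chi_apply, quadraticChar_neg_one_iff_not_isSquare.mpr hsq]
        norm_num
      rw [if_neg hq, hχ, z0]
      rw [map_add, map_mul, Complex.conj_ofReal, Complex.conj_ofReal, Complex.conj_I]
      ring

lemma cos_sq_add_sin_sq : (cosR p : ℂ) ^ 2 + (sinR p : ℂ) ^ 2 = 1 := by
  have h : cosR p ^ 2 + sinR p ^ 2 = 1 := by
    rw [sin_sq]; ring
  exact_mod_cast congrArg (fun t : ℝ => (t : ℂ)) h

lemma nw_unit (a : ZMod p) : (starRingEnd ℂ) (nw p a) * nw p a = 1 := by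
  by_cases h : a = 0
  · have hw : nw p a = 1 := by
      simp [nw, h, chi_zero]
    rw [hw]
    simp
  · have key := cos_sq_add_sin_sq (p := p)
    have hd : chi p a = 1 ∨ chi p a = -1 := by
      rcases quadraticChar_dichotomy (F := ZMod p) h with hq | hq <;>
        [left; right] <;> rw [chi_apply, hq] <;> norm_num
    rcases hd with hχ | hχ
    · have hw : nw p a = (cosR p : ℂ) + Complex.I * (sinR p : ℂ) := by
        simp [nw, h, hχ]
      rw [hw, map_add, map_mul, Complex.conj_ofReal, Complex.conj_ofReal, Complex.conj_I]
      linear_combination key - (sinR p : ℂ) ^ 2 * Complex.I_sq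
    · have hw : nw p a = (cosR p : ℂ) - Complex.I * (sinR p : ℂ) := by
        simp [nw, h, hχ]
        ring
      rw [hw, map_sub, map_mul, Complex.conj_ofReal, Complex.conj_ofReal, Complex.conj_I]
      linear_combination key - (sinR p : ℂ) ^ 2 * Complex.I_sq

/-- the (conjugate) discrete Fourier transform of `nw`. -/
noncomputable def VV (p : ℕ) [Fact p.Prime] (j : ZMod p) : ℂ :=
  ∑ a : ZMod p, psi p (-(j * a)) * nw p a

lemma VV_expand (j : ZMod p) :
    VV p j = (cosR p : ℂ) * (∑ a : ZMod p, psi p (-(j * a)))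
      + Complex.I * (sinR p : ℂ) * (∑ a : ZMod p, chi p a * psi p (-(j * a)))
      + (1 - (cosR p : ℂ)) := by
  unfold VV
  calc (∑ a : ZMod p, psi p (-(j * a)) * nw p a)
      = ∑ a : ZMod p, ((cosR p : ℂ) * psi p (-(j * a))
          + Complex.I * (sinR p : ℂ) * (chi p a * psi p (-(j * a)))
          + (if a = 0 then (1 - (cosR p : ℂ)) * psi p (-(j * a)) else 0)) := by
        refine Finset.sum_congr rfl fun a _ => ?_
        unfold nw
        by_cases h : a = 0
        · rw [if_pos h, if_pos h]; ring
        · rw [if_neg h, if_neg h]; ring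
    _ = _ := by
        rw [Finset.sum_add_distrib, Finset.sum_add_distrib,
          ← Finset.mul_sum, ← Finset.mul_sum,
          Finset.sum_ite_eq' Finset.univ (0 : ZMod p)]
        simp

lemma sum_psi_eq (j : ZMod p) :
    (∑ a : ZMod p, psi p (-(j * a))) = if j = 0 then (p : ℂ) else 0 := by
  have h1 : ∀ a : ZMod p, -(j * a) = a * (-j) := fun a => by ring
  simp_rw [h1]
  rw [AddChar.sum_mulShift (-j) psi_prim, ZMod.card]
  simp [neg_eq_zero]

lemma T_eval (hp4 : p % 4 = 1) (j : ZMod p) :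
    (∑ a : ZMod p, chi p a * psi p (-(j * a)))
      = if j = 0 then 0 else chi p j * gauss p := by
  by_cases hj : j = 0
  · simp only [hj, if_pos rfl, zero_mul, neg_zero, AddChar.map_zero_eq_one, mul_one]
    exact sum_chi hp4
  · rw [if_neg hj]
    have h1 : ∀ a : ZMod p, -(j * a) = (-j) * a := fun a => by ring
    simp_rw [h1]
    rw [twist hp4 (neg_ne_zero.mpr hj), chi_neg hp4]

lemma V_eval (hp4 : p % 4 = 1) (j : ZMod p) :
    (starRingEnd ℂ) (VV p j) * VV p j = (p : ℂ) := by
  by_cases hj : j = 0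
  · have hV : VV p j = ((Real.sqrt p : ℝ) : ℂ) := by
      rw [VV_expand, sum_psi_eq, T_eval hp4, if_pos hj, if_pos hj]
      have : ((p : ℝ) - 1) * cosR p + 1 = Real.sqrt p := num_V0
      push_cast [← this]
      ring
    rw [hV, Complex.conj_ofReal, ← Complex.ofReal_mul,
      Real.mul_self_sqrt (by positivity)]
    norm_cast
  · have hV : VV p j = (1 - (cosR p : ℂ))
        + Complex.I * (sinR p : ℂ) * (chi p j * gauss p) := by
      rw [VV_expand, sum_psi_eq, T_eval hp4, if_neg hj, if_neg hj]
      ring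
    have hX2 : (chi p j * gauss p) ^ 2 = (p : ℂ) := by
      rw [mul_pow, pow_two, chi_mul_self hj, one_mul, gauss_sq hp4]
    have hconj : (starRingEnd ℂ) (VV p j) = (1 - (cosR p : ℂ))
        - Complex.I * (sinR p : ℂ) * (chi p j * gauss p) := by
      rw [hV]
      rw [map_add, map_sub, map_mul, map_mul, map_mul, Complex.conj_ofReal,
        Complex.conj_ofReal, Complex.conj_I, conj_chi, conj_gauss hp4, map_one]
      ring
    have hkey : ((1 : ℂ) - (cosR p : ℂ)) ^ 2 + (sinR p : ℂ) ^ 2 * (p : ℂ) = (p : ℂ) := by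
      have h := num_key (p := p)
      exact_mod_cast congrArg (fun t : ℝ => (t : ℂ)) h
    rw [hconj, hV]
    linear_combination hkey + (sinR p : ℂ) ^ 2 * hX2
      - (sinR p : ℂ) ^ 2 * (chi p j * gauss p) ^ 2 * Complex.I_sq

end vecs

section main
variable [hpF : Fact p.Prime]

noncomputable def uVec (p : ℕ) (k : Fin p) : EuclideanSpace ℂ (Fin p) :=
  ((Real.sqrt p : ℂ))⁻¹ • cyclicShift k (vStar p)

lemma sqrt_inv_mul :
    ((Real.sqrt p : ℂ))⁻¹ * ((Real.sqrt p : ℂ))⁻¹ = ((p : ℕ) : ℂ)⁻¹ := by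
  rw [← mul_inv, ← Complex.ofReal_mul, Real.mul_self_sqrt (by positivity),
    Complex.ofReal_natCast]

lemma p_ne_zero_C : ((p : ℕ) : ℂ) ≠ 0 := by
  exact_mod_cast Nat.cast_ne_zero.mpr (NeZero.ne p)

lemma conj_fourier (j n : Fin p) :
    (starRingEnd ℂ) (fourierVec p j n)
      = psi p (-(((j : ℕ) : ZMod p) * ((n : ℕ) : ZMod p))) * ((Real.sqrt p : ℂ))⁻¹ := by
  show (starRingEnd ℂ) (omegaRoot p ^ ((j : ℕ) * (n : ℕ)) / (Real.sqrt p : ℂ)) = _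
  have h1 : omegaRoot p ^ ((j : ℕ) * (n : ℕ))
      = psi p (((j : ℕ) : ZMod p) * ((n : ℕ) : ZMod p)) := by
    rw [← Nat.cast_mul, psi_nat]
  rw [div_eq_mul_inv, h1, map_mul, conj_psi, map_inv₀, Complex.conj_ofReal]

lemma fourier_apply (j n : Fin p) :
    fourierVec p j n
      = psi p (((j : ℕ) : ZMod p) * ((n : ℕ) : ZMod p)) * ((Real.sqrt p : ℂ))⁻¹ := by
  show omegaRoot p ^ ((j : ℕ) * (n : ℕ)) / (Real.sqrt p : ℂ) = _
  rw [div_eq_mul_inv, ← Nat.cast_mul, psi_nat]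

lemma uVec_apply (k n : Fin p) :
    uVec p k n = ((Real.sqrt p : ℂ))⁻¹ * nw p (((n : ℕ) : ZMod p) - ((k : ℕ) : ZMod p)) := by
  show ((Real.sqrt p : ℂ))⁻¹ • (cyclicShift k (vStar p)) n = _
  rw [smul_eq_mul]
  show ((Real.sqrt p : ℂ))⁻¹ * vStar p (n - k) = _
  rw [vStar_eq, c_sub]

lemma inner_single (j k : Fin p) :
    ⟪EuclideanSpace.single j (1 : ℂ), uVec p k⟫
      = ((Real.sqrt p : ℂ))⁻¹ * nw p (((j : ℕ) : ZMod p) - ((k : ℕ) : ZMod p)) := by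
  rw [EuclideanSpace.inner_single_left, map_one, one_mul, uVec_apply]

lemma inner_fourier (j k : Fin p) :
    ⟪fourierVec p j, uVec p k⟫
      = ((p : ℕ) : ℂ)⁻¹ * (psi p (-(((j : ℕ) : ZMod p) * ((k : ℕ) : ZMod p)))
          * VV p (((j : ℕ) : ZMod p))) := by
  set cj := (((j : ℕ) : ZMod p)) with hcj
  set ck := (((k : ℕ) : ZMod p)) with hck
  rw [PiLp.inner_apply]
  simp_rw [RCLike.inner_apply']
  calc ∑ n : Fin p, (starRingEnd ℂ) (fourierVec p j n) * uVec p k n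
      = ∑ n : Fin p, ((p : ℕ) : ℂ)⁻¹
          * (psi p (-(cj * ((n : ℕ) : ZMod p))) * nw p (((n : ℕ) : ZMod p) - ck)) := by
        refine Finset.sum_congr rfl fun n _ => ?_
        rw [conj_fourier, uVec_apply, ← sqrt_inv_mul]
        ring
    _ = ((p : ℕ) : ℂ)⁻¹ * ∑ a : ZMod p, psi p (-(cj * a)) * nw p (a - ck) := by
        rw [← Finset.mul_sum]
        congr 1
        exact Fintype.sum_equiv (eqv p) _ _ fun n => rfl
    _ = ((p : ℕ) : ℂ)⁻¹ * ∑ b : ZMod p, psi p (-(cj * (b + ck))) * nw p b := by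
        congr 1
        refine Fintype.sum_equiv (Equiv.subRight ck) _ _ fun a => ?_
        simp only [Equiv.subRight_apply]
        rw [sub_add_cancel]
    _ = _ := by
        have h : ∀ b : ZMod p, psi p (-(cj * (b + ck)))
            = psi p (-(cj * ck)) * psi p (-(cj * b)) := by
          intro b
          rw [← AddChar.map_add_eq_mul]
          congr 1
          ring
        simp_rw [h, mul_assoc]
        rw [← Finset.mul_sum, VV]

lemma inner_fourier_fourier (i j : Fin p) :
    ⟪fourierVec p i, fourierVec p j⟫ = if i = j then (1 : ℂ) else 0 := by
  set ci := (((i : ℕ) : ZMod p)) with hci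
  set cj := (((j : ℕ) : ZMod p)) with hcj
  rw [PiLp.inner_apply]
  simp_rw [RCLike.inner_apply']
  have step : ∑ n : Fin p, (starRingEnd ℂ) (fourierVec p i n) * fourierVec p j n
      = ((p : ℕ) : ℂ)⁻¹ * ∑ a : ZMod p, psi p (a * (cj - ci)) := by
    calc ∑ n : Fin p, (starRingEnd ℂ) (fourierVec p i n) * fourierVec p j n
        = ∑ n : Fin p, ((p : ℕ) : ℂ)⁻¹ * psi p (((n : ℕ) : ZMod p) * (cj - ci)) := by
          refine Finset.sum_congr rfl fun n _ => ?_
          rw [conj_fourier, fourier_apply, ← sqrt_inv_mul]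
          have harg : psi p (-(ci * ((n : ℕ) : ZMod p))) * psi p (cj * ((n : ℕ) : ZMod p))
              = psi p (((n : ℕ) : ZMod p) * (cj - ci)) := by
            rw [← AddChar.map_add_eq_mul]
            congr 1
            ring
          rw [← harg]
          ring
      _ = ((p : ℕ) : ℂ)⁻¹ * ∑ a : ZMod p, psi p (a * (cj - ci)) := by
          rw [← Finset.mul_sum]
          congr 1
          exact Fintype.sum_equiv (eqv p) _ _ fun n => rfl
  rw [step, AddChar.sum_mulShift _ psi_prim, ZMod.card]
  by_cases h : i = j
  · rw [if_pos h, if_pos (by rw [hci, hcj, h, sub_self]), inv_mul_cancel₀ p_ne_zero_C]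
  · have hcc : cj ≠ ci := fun hc => h ((eqv p).injective hc).symm
    have hne : cj - ci ≠ 0 := sub_ne_zero.mpr hcc
    rw [if_neg hne, Nat.cast_zero, mul_zero, if_neg h]

lemma orthonormal_fourier : Orthonormal ℂ (fourierVec p) :=
  orthonormal_iff_ite.mpr inner_fourier_fourier

lemma card_eq_finrank :
    Fintype.card (Fin p) = Module.finrank ℂ (EuclideanSpace ℂ (Fin p)) := by
  simp [finrank_euclideanSpace_fin]

noncomputable def fourierONB (p : ℕ) [Fact p.Prime] :
    OrthonormalBasis (Fin p) ℂ (EuclideanSpace ℂ (Fin p)) :=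
  (basisOfOrthonormalOfCardEqFinrank orthonormal_fourier card_eq_finrank).toOrthonormalBasis
    (by rw [coe_basisOfOrthonormalOfCardEqFinrank]; exact orthonormal_fourier)

lemma fourierONB_apply (j : Fin p) : fourierONB p j = fourierVec p j := by
  rw [fourierONB, Module.Basis.coe_toOrthonormalBasis, coe_basisOfOrthonormalOfCardEqFinrank]

lemma conj_pinv : (starRingEnd ℂ) ((p : ℕ) : ℂ)⁻¹ = ((p : ℕ) : ℂ)⁻¹ := by
  rw [map_inv₀, map_natCast]

lemma orthonormal_uVec (hp4 : p % 4 = 1) : Orthonormal ℂ (uVec p) := by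
  rw [orthonormal_iff_ite]
  intro k l
  set ck := (((k : ℕ) : ZMod p)) with hck
  set cl := (((l : ℕ) : ZMod p)) with hcl
  rw [← (fourierONB p).sum_inner_mul_inner (uVec p k) (uVec p l)]
  have step : ∑ j : Fin p, ⟪uVec p k, fourierONB p j⟫ * ⟪fourierONB p j, uVec p l⟫
      = ((p : ℕ) : ℂ)⁻¹ * ∑ a : ZMod p, psi p (a * (ck - cl)) := by
    calc ∑ j : Fin p, ⟪uVec p k, fourierONB p j⟫ * ⟪fourierONB p j, uVec p l⟫
        = ∑ j : Fin p, ((p : ℕ) : ℂ)⁻¹ * psi p (((j : ℕ) : ZMod p) * (ck - cl)) := by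
          refine Finset.sum_congr rfl fun j _ => ?_
          set cj := (((j : ℕ) : ZMod p)) with hcj
          have h1 : ⟪uVec p k, fourierONB p j⟫
              = (starRingEnd ℂ) ⟪fourierVec p j, uVec p k⟫ := by
            rw [fourierONB_apply, inner_conj_symm]
          rw [h1, fourierONB_apply, inner_fourier, inner_fourier]
          rw [map_mul, map_mul, conj_pinv, conj_psi, neg_neg]
          have harg : psi p (cj * ck) * psi p (-(cj * cl))
              = psi p (cj * (ck - cl)) := by
            rw [← AddChar.map_add_eq_mul]
            congr 1
            ring
          calc ((p : ℕ) : ℂ)⁻¹ * (psi p (cj * ck) * (starRingEnd ℂ) (VV p cj))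
                * (((p : ℕ) : ℂ)⁻¹ * (psi p (-(cj * cl)) * VV p cj))
              = (((p : ℕ) : ℂ)⁻¹ * ((p : ℕ) : ℂ)⁻¹)
                  * ((psi p (cj * ck) * psi p (-(cj * cl)))
                    * ((starRingEnd ℂ) (VV p cj) * VV p cj)) := by ring
            _ = (((p : ℕ) : ℂ)⁻¹ * ((p : ℕ) : ℂ)⁻¹)
                  * (psi p (cj * (ck - cl)) * ((p : ℕ) : ℂ)) := by
                rw [harg, V_eval hp4]
            _ = ((p : ℕ) : ℂ)⁻¹ * psi p (cj * (ck - cl)) := by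
                have hc : ((p : ℕ) : ℂ)⁻¹ * ((p : ℕ) : ℂ) = 1 := inv_mul_cancel₀ p_ne_zero_C
                calc (((p : ℕ) : ℂ)⁻¹ * ((p : ℕ) : ℂ)⁻¹)
                      * (psi p (cj * (ck - cl)) * ((p : ℕ) : ℂ))
                    = (((p : ℕ) : ℂ)⁻¹ * psi p (cj * (ck - cl)))
                        * (((p : ℕ) : ℂ)⁻¹ * ((p : ℕ) : ℂ)) := by ring
                  _ = ((p : ℕ) : ℂ)⁻¹ * psi p (cj * (ck - cl)) := by rw [hc, mul_one]
      _ = ((p : ℕ) : ℂ)⁻¹ * ∑ a : ZMod p, psi p (a * (ck - cl)) := by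
          rw [← Finset.mul_sum]
          congr 1
          exact Fintype.sum_equiv (eqv p) _ _ fun n => rfl
  rw [step, AddChar.sum_mulShift _ psi_prim, ZMod.card]
  by_cases h : k = l
  · rw [if_pos h, if_pos (by rw [hck, hcl, h, sub_self]), inv_mul_cancel₀ p_ne_zero_C]
  · have hcc : ck ≠ cl := fun hc => h ((eqv p).injective hc)
    have hne : ck - cl ≠ 0 := sub_ne_zero.mpr hcc
    rw [if_neg hne, Nat.cast_zero, mul_zero, if_neg h]

lemma sq_abs_helper {z : ℂ} {r : ℝ} (h : (starRingEnd ℂ) z * z = (r : ℂ)) :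
    ‖z‖ ^ 2 = r := by
  have h2 : ((Complex.normSq z : ℝ) : ℂ) = (r : ℂ) := by
    rw [Complex.normSq_eq_conj_mul_self, h]
  rw [Complex.sq_norm]
  exact_mod_cast h2

end main

end StmtAux

theorem stmt_9 (p : ℕ) (hp : p.Prime) (hp4 : p % 4 = 1) :
    ∃ B : OrthonormalBasis (Fin p) ℂ (EuclideanSpace ℂ (Fin p)),
      (∀ k : Fin p, B k = ((Real.sqrt p : ℂ))⁻¹ • cyclicShift k (vStar p)) ∧
      (∀ j k : Fin p,
        ‖⟪EuclideanSpace.single j (1 : ℂ), B k⟫‖ ^ 2 = 1 / p) ∧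
      (∀ j k : Fin p, ‖⟪fourierVec p j, B k⟫‖ ^ 2 = 1 / p) := by
  haveI : Fact p.Prime := ⟨hp⟩
  have hON := StmtAux.orthonormal_uVec (p := p) hp4
  let b := basisOfOrthonormalOfCardEqFinrank hON StmtAux.card_eq_finrank
  have hb : ⇑b = StmtAux.uVec p := coe_basisOfOrthonormalOfCardEqFinrank _ _
  have hOrth : Orthonormal ℂ ⇑b := by rw [hb]; exact hON
  have hB : ∀ k : Fin p, (b.toOrthonormalBasis hOrth) k = StmtAux.uVec p k := fun k => by
    rw [Module.Basis.coe_toOrthonormalBasis, hb]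
  refine ⟨b.toOrthonormalBasis hOrth, ?_, ?_, ?_⟩
  · intro k
    rw [hB k]
    rfl
  · intro j k
    rw [hB k]
    refine StmtAux.sq_abs_helper ?_
    rw [StmtAux.inner_single]
    rw [map_mul, map_inv₀, Complex.conj_ofReal]
    set w := StmtAux.nw p (((j : ℕ) : ZMod p) - ((k : ℕ) : ZMod p)) with hw
    calc ((Real.sqrt p : ℂ))⁻¹ * (starRingEnd ℂ) w * (((Real.sqrt p : ℂ))⁻¹ * w)
        = (((Real.sqrt p : ℂ))⁻¹ * ((Real.sqrt p : ℂ))⁻¹) * ((starRingEnd ℂ) w * w) := by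
          ring
      _ = ((p : ℕ) : ℂ)⁻¹ * 1 := by rw [StmtAux.sqrt_inv_mul, StmtAux.nw_unit]
      _ = (((1 : ℝ) / p : ℝ) : ℂ) := by push_cast; ring
  · intro j k
    rw [hB k]
    refine StmtAux.sq_abs_helper ?_
    rw [StmtAux.inner_fourier]
    set y := (((j : ℕ) : ZMod p)) * (((k : ℕ) : ZMod p)) with hy
    set V := StmtAux.VV p (((j : ℕ) : ZMod p)) with hV
    rw [map_mul, map_mul, StmtAux.conj_pinv, StmtAux.conj_psi, neg_neg]
    have hp0 : ((p : ℕ) : ℂ) ≠ 0 := StmtAux.p_ne_zero_C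
    have hψ : StmtAux.psi p y * StmtAux.psi p (-y) = 1 := by
      rw [mul_comm]; exact StmtAux.psi_neg_mul y
    have hc : ((p : ℕ) : ℂ)⁻¹ * ((p : ℕ) : ℂ) = 1 := inv_mul_cancel₀ hp0
    calc ((p : ℕ) : ℂ)⁻¹ * (StmtAux.psi p y * (starRingEnd ℂ) V)
          * (((p : ℕ) : ℂ)⁻¹ * (StmtAux.psi p (-y) * V))
        = (((p : ℕ) : ℂ)⁻¹ * ((p : ℕ) : ℂ)⁻¹)
            * ((StmtAux.psi p y * StmtAux.psi p (-y)) * ((starRingEnd ℂ) V * V)) := by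
          ring
      _ = (((p : ℕ) : ℂ)⁻¹ * ((p : ℕ) : ℂ)⁻¹) * (1 * ((p : ℕ) : ℂ)) := by
          rw [hψ, StmtAux.V_eval hp4]
      _ = ((p : ℕ) : ℂ)⁻¹ * (((p : ℕ) : ℂ)⁻¹ * ((p : ℕ) : ℂ)) := by ring
      _ = (((1 : ℝ) / p : ℝ) : ℂ) := by rw [hc, mul_one]; push_cast; ring
end
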